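/- Let H be a pseudoexpander with m = |Roots(H)|, let M be a pseudomatching of H, let η = (3/12800)·m^(−4/4.9), and let X_M = Σ_{{t_i,t_j} ∈ M} X_{i,j} on the probability space on SAT(H). Then Pr(X_M < η·|M|) ≤ 0.4^(100·η·|M|). -/

import Mathlib

open scoped Classical

namespace NBPPaper

/-! ### Literals and assignments.
A literal is a pair `(x, b)` of a variable and a polarity (`true` = positive literal).
A set of literals is a `Finset (Var × Bool)`. -/

/-- A set of literals is consistent: no variable occurs both positively and negatively. -/
def Consistent {Var : Type} (S : Finset (Var × Bool)) : Prop :=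
  ∀ x : Var, ¬((x, true) ∈ S ∧ (x, false) ∈ S)

/-- `S` is a set of literals over the variable set `W`. -/
def LitsOver {Var : Type} (W : Finset Var) (S : Finset (Var × Bool)) : Prop :=
  Consistent S ∧ ∀ l ∈ S, l.1 ∈ W

/-- `S` is an assignment of exactly the variables of `W`:
it contains exactly one literal of each variable of `W` and nothing else. -/
def AssignsExactly {Var : Type} (W : Finset Var) (S : Finset (Var × Bool)) : Prop :=
  (∀ l ∈ S, l.1 ∈ W) ∧ ∀ x ∈ W, ∃! b : Bool, (x, b) ∈ S

/-- Satisfaction of a CNF, given as a set of clauses (each clause a set of literals):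
every clause contains a literal of `S`. -/
def SatCNF {V : Type} (φ : Set (Finset (V × Bool))) (S : Finset (V × Bool)) : Prop :=
  ∀ C ∈ φ, ∃ l ∈ C, l ∈ S

/-! ### Nondeterministic branching programs -/

/-- An edge of a nondeterministic branching program over variable type `Var`
with vertex set `Fin n`.  `lab = none` means the edge is unlabelled; the field
`id` allows parallel edges (multigraph). -/
structure NBPEdge (Var : Type) (n : ℕ) where
  src : Fin n
  dst : Fin n
  lab : Option (Var × Bool)
  id : ℕ
deriving DecidableEq

/-- A nondeterministic branching program: a finite DAG (the vertices `Fin n` are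
listed in a topological order, i.e. every edge increases the index) with a single
source (the only vertex with no incoming edge) and a single sink (the only vertex
with no outgoing edge). -/
structure NBP (Var : Type) where
  n : ℕ
  edges : Finset (NBPEdge Var n)
  source : Fin n
  sink : Fin n
  acyc : ∀ e ∈ edges, e.src < e.dst
  source_no_in : ∀ e ∈ edges, e.dst ≠ source
  sink_no_out : ∀ e ∈ edges, e.src ≠ sink
  only_source : ∀ v : Fin n, v ≠ source → ∃ e ∈ edges, e.dst = v
  only_sink : ∀ v : Fin n, v ≠ sink → ∃ e ∈ edges, e.src = v

variable {Var : Type}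

/-- The set of literals labelling the edges of a path (a list of edges). -/
def pathLits [DecidableEq Var] {n : ℕ} (p : List (NBPEdge Var n)) : Finset (Var × Bool) :=
  (p.filterMap NBPEdge.lab).toFinset

/-- The set of variables occurring (as edge labels) on a path. -/
def pathVars [DecidableEq Var] {n : ℕ} (p : List (NBPEdge Var n)) : Finset Var :=
  ((p.filterMap NBPEdge.lab).map Prod.fst).toFinset

/-- The set of vertices visited by a path. -/
def pathVertices {n : ℕ} (p : List (NBPEdge Var n)) : Finset (Fin n) :=
  (p.map NBPEdge.src).toFinset ∪ (p.map NBPEdge.dst).toFinset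

/-- The number of occurrences of the variable `x` as an edge label on the path `p`. -/
def occCount [DecidableEq Var] {n : ℕ} (x : Var) (p : List (NBPEdge Var n)) : ℕ :=
  (p.filterMap NBPEdge.lab).countP (fun l => decide (l.1 = x))

namespace NBP

/-- `p` is a directed path of `Z` from vertex `u` to vertex `v`. -/
def IsPathFrom (Z : NBP Var) (u v : Fin Z.n) (p : List (NBPEdge Var Z.n)) : Prop :=
  p ≠ [] ∧ (∀ e ∈ p, e ∈ Z.edges) ∧ List.Chain' (fun e f => e.dst = f.src) p ∧
    p.head?.map NBPEdge.src = some u ∧ p.getLast?.map NBPEdge.dst = some v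

/-- `p` is a source-sink path of `Z`. -/
def IsSourceSink (Z : NBP Var) (p : List (NBPEdge Var Z.n)) : Prop :=
  Z.IsPathFrom Z.source Z.sink p

/-- A computational path: a source-sink path carrying no two opposite literals. -/
def IsCompPath [DecidableEq Var] (Z : NBP Var) (p : List (NBPEdge Var Z.n)) : Prop :=
  Z.IsSourceSink p ∧ Consistent (pathLits p)

/-- The set `Vars(Z)` of variables whose literals occur on edges of `Z`. -/
def vars [DecidableEq Var] (Z : NBP Var) : Finset Var :=
  Z.edges.biUnion (fun e => (e.lab.map Prod.fst).toFinset)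

/-- `Z` is a (syntactic) read-`d`-times NBP. -/
def ReadTimes [DecidableEq Var] (Z : NBP Var) (d : ℕ) : Prop :=
  ∀ p, Z.IsSourceSink p → ∀ x : Var, occCount x p ≤ d

/-- `Z` is a uniform read-`d`-times NBP: every variable of `Z` occurs exactly `d`
times on every source-sink path. -/
def UniformReadTimes [DecidableEq Var] (Z : NBP Var) (d : ℕ) : Prop :=
  Z.ReadTimes d ∧ ∀ p, Z.IsSourceSink p → ∀ x ∈ Z.vars, occCount x p = d

/-- `Z` computes the Boolean function with variable set `W` whose satisfying
(total) assignments are described by the predicate `F`. -/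
def Computes [DecidableEq Var] (Z : NBP Var) (W : Finset Var)
    (F : Finset (Var × Bool) → Prop) : Prop :=
  Z.vars = W ∧ ∀ S, AssignsExactly W S → (F S ↔ ∃ p, Z.IsCompPath p ∧ pathLits p ⊆ S)

end NBP

/-- `parts` is the partition of the path `p` generated by the vertex set `X`:
`p` is cut into `|X| + 1` consecutive nonempty subpaths whose cut points are
exactly the vertices of `X`. -/
def GeneratesPartition {n : ℕ} (X : Finset (Fin n)) (p : List (NBPEdge Var n))
    (parts : List (List (NBPEdge Var n))) : Prop :=
  p = parts.flatten ∧ parts.length = X.card + 1 ∧ (∀ q ∈ parts, q ≠ []) ∧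
    (parts.dropLast.filterMap (fun q => q.getLast?.map NBPEdge.dst)).toFinset = X

/-- Variables of `Y₁` occur only on parts with even (0-based) index, i.e. odd-numbered
subpaths, and variables of `Y₂` only on parts with odd (0-based) index. -/
def OddEvenSplit [DecidableEq Var] {n : ℕ} (parts : List (List (NBPEdge Var n)))
    (Y₁ Y₂ : Finset Var) : Prop :=
  ∀ k : ℕ, ∀ x ∈ pathVars (parts.getD k []),
    (x ∈ Y₁ → k % 2 = 0) ∧ (x ∈ Y₂ → k % 2 = 1)

/-- The set `X` of vertices of `Z` (containing neither source nor sink) separates the two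
disjoint subsets `Y₁, Y₂` of `Vars(Z)`. -/
def NBP.Separates [DecidableEq Var] (Z : NBP Var) (X : Finset (Fin Z.n))
    (Y₁ Y₂ : Finset Var) : Prop :=
  Disjoint Y₁ Y₂ ∧ Y₁ ⊆ Z.vars ∧ Y₂ ⊆ Z.vars ∧ Z.source ∉ X ∧ Z.sink ∉ X ∧
  ∃ p parts, Z.IsCompPath p ∧ GeneratesPartition X p parts ∧
    (OddEvenSplit parts Y₁ Y₂ ∨ OddEvenSplit parts Y₂ Y₁)

/-! ### Rooted trees -/

/-- A finite rooted tree on (a subset of) the vertex type `V`, given by a parent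
function together with a depth function certifying acyclicity. -/
structure RootedTree (V : Type) [DecidableEq V] where
  verts : Finset V
  root : V
  parent : V → V
  depth : V → ℕ
  root_mem : root ∈ verts
  parent_mem : ∀ v ∈ verts, v ≠ root → parent v ∈ verts
  depth_root : depth root = 0
  depth_parent : ∀ v ∈ verts, v ≠ root → depth v = depth (parent v) + 1

namespace RootedTree

variable {V : Type} [DecidableEq V]

/-- The children of a vertex. -/
def children (T : RootedTree V) (u : V) : Finset V :=
  T.verts.filter (fun v => v ≠ T.root ∧ T.parent v = u)

/-- The leaves of the tree: vertices with no children. -/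
def leaves (T : RootedTree V) : Finset V :=
  T.verts.filter (fun v => T.children v = ∅)

/-- The vertex set of the path from the root to `v` (i.e. `v` and all its ancestors). -/
def pathVerts (T : RootedTree V) (v : V) : Finset V :=
  (Finset.range (T.depth v + 1)).image (fun k => T.parent^[k] v)

/-- The height of the tree: the largest number of vertices on a root-leaf path. -/
def height (T : RootedTree V) : ℕ :=
  (T.verts.sup T.depth) + 1

/-- Every vertex has at most two children. -/
def IsBinary (T : RootedTree V) : Prop :=
  ∀ u ∈ T.verts, (T.children u).card ≤ 2

/-- The tree is extended: none of its leaves has a sibling. -/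
def IsExtended (T : RootedTree V) : Prop :=
  ∀ v ∈ T.verts, v ≠ T.root → T.children v = ∅ → T.children (T.parent v) = {v}

/-- The edge set of the tree (as unordered pairs). -/
def edgeSet (T : RootedTree V) : Finset (Sym2 V) :=
  (T.verts.filter (fun v => v ≠ T.root)).image (fun v => s(v, T.parent v))

end RootedTree

/-! ### Binary-tree-based graphs and pseudoexpanders -/

/-- A binary-tree-based (BTB) graph on the vertex type `V`: an edge-disjoint union of
`m` extended binary rooted trees such that every leaf of one of the trees is a leaf of
exactly two of the trees, any two trees have at most one vertex in common (that vertex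
being a leaf of both), and the roots are pairwise distinct. -/
structure BTB (V : Type) [DecidableEq V] [Fintype V] where
  m : ℕ
  tree : Fin m → RootedTree V
  binary : ∀ i, (tree i).IsBinary
  extended : ∀ i, (tree i).IsExtended
  cover : ∀ v : V, ∃ i, v ∈ (tree i).verts
  edge_disjoint : ∀ i j, i ≠ j → Disjoint ((tree i).edgeSet) ((tree j).edgeSet)
  leaf_two : ∀ i, ∀ v ∈ (tree i).leaves,
    (Finset.univ.filter (fun j => v ∈ (tree j).leaves)).card = 2
  common_le_one : ∀ i j, i ≠ j → ∀ u v,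
    u ∈ (tree i).verts → u ∈ (tree j).verts →
    v ∈ (tree i).verts → v ∈ (tree j).verts → u = v
  common_leaf : ∀ i j, i ≠ j → ∀ v, v ∈ (tree i).verts → v ∈ (tree j).verts →
    v ∈ (tree i).leaves ∧ v ∈ (tree j).leaves
  roots_inj : Function.Injective (fun i => (tree i).root)

namespace BTB

variable {V : Type} [DecidableEq V] [Fintype V]

/-- `ℓ` is the common leaf of the (adjacent) trees `T_i` and `T_j`. -/
def IsCommonLeaf (H : BTB V) (i j : Fin H.m) (ℓ : V) : Prop :=
  i ≠ j ∧ ℓ ∈ (H.tree i).leaves ∧ ℓ ∈ (H.tree j).leaves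

/-- The trees `T_i` and `T_j` are adjacent (share a common leaf); equivalently,
`{t_i, t_j}` is a pseudoedge of `H`. -/
def Adjacent (H : BTB V) (i j : Fin H.m) : Prop :=
  ∃ ℓ, H.IsCommonLeaf i j ℓ

/-- The pseudodegree of the root `t_i`: the number of pseudoedges containing it. -/
noncomputable def pseudodegree (H : BTB V) (i : Fin H.m) : ℕ :=
  (Finset.univ.filter (fun j => H.Adjacent i j)).card

/-- The set of root vertices of `H`. -/
def rootSet (H : BTB V) : Finset V :=
  Finset.univ.image (fun i => (H.tree i).root)

/-- A pseudomatching: a set of pseudoedges (recorded as ordered pairs of root indices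
with `i < j`) no two of which share an end. -/
def IsPseudomatching (H : BTB V) (M : Finset (Fin H.m × Fin H.m)) : Prop :=
  (∀ e ∈ M, e.1 < e.2 ∧ H.Adjacent e.1 e.2) ∧
  ∀ e ∈ M, ∀ f ∈ M, e ≠ f → e.1 ≠ f.1 ∧ e.1 ≠ f.2 ∧ e.2 ≠ f.1 ∧ e.2 ≠ f.2

/-- A pseudomatching between the disjoint sets `U` and `W` of roots (given by their
indices): every pseudoedge of `M` has one end in `U` and the other in `W`. -/
def IsPseudomatchingBetween (H : BTB V) (M : Finset (Fin H.m × Fin H.m))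
    (U W : Finset (Fin H.m)) : Prop :=
  H.IsPseudomatching M ∧ ∀ e ∈ M, (e.1 ∈ U ∧ e.2 ∈ W) ∨ (e.1 ∈ W ∧ e.2 ∈ U)

/-- The set `⋃M` of root vertices matched by the pseudomatching `M`. -/
def matchingRoots (H : BTB V) (M : Finset (Fin H.m × Fin H.m)) : Finset V :=
  M.biUnion (fun e => {(H.tree e.1).root, (H.tree e.2).root})

/-- The vertex set `V(P_{i,j})` of the path connecting the roots `t_i` and `t_j`
through their common leaf `ℓ`. -/
def clauseVerts (H : BTB V) (i j : Fin H.m) (ℓ : V) : Finset V :=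
  (H.tree i).pathVerts ℓ ∪ (H.tree j).pathVerts ℓ

/-- `S` satisfies the monotone CNF `φ_H`. -/
def SatisfiesPhi (H : BTB V) (S : Finset (V × Bool)) : Prop :=
  ∀ i j ℓ, H.IsCommonLeaf i j ℓ → ∃ v ∈ H.clauseVerts i j ℓ, (v, true) ∈ S

/-- `S` falsifies no clause of `φ_H`. -/
def FalsifiesNoClause (H : BTB V) (S : Finset (V × Bool)) : Prop :=
  ∀ i j ℓ, H.IsCommonLeaf i j ℓ → ¬(∀ v ∈ H.clauseVerts i j ℓ, (v, false) ∈ S)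

/-- `H` is a pseudoexpander. -/
def IsPseudoexpander (H : BTB V) : Prop :=
  (∀ i, ((H.tree i).height : ℝ) ≤ Real.logb 2 H.m / 4.9 + 3) ∧
  ∀ U W : Finset (Fin H.m), Disjoint U W →
    (H.m : ℝ) ^ (0.999 : ℝ) ≤ U.card → (H.m : ℝ) ^ (0.999 : ℝ) ≤ W.card →
    ∃ M, H.IsPseudomatchingBetween M U W ∧ (H.m : ℝ) ^ (0.999 : ℝ) / 3 ≤ M.card

/-! #### The probability space on the satisfying assignments of `φ_H` -/

/-- The set `SAT(H)` of satisfying assignments of `φ_H` (total assignments of the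
variables `V(H)` satisfying every clause). -/
noncomputable def SATH (H : BTB V) : Finset (Finset (V × Bool)) :=
  Finset.univ.filter (fun S => AssignsExactly Finset.univ S ∧ H.SatisfiesPhi S)

/-- `Fix(S)`: the set of leaf variables `ℓ_{i,j}` occurring positively in `S` such that
all the other variables of the clause `C_{i,j}` occur negatively in `S`. -/
def Fix (H : BTB V) (S : Finset (V × Bool)) : Set V :=
  {ℓ | ∃ i j, H.IsCommonLeaf i j ℓ ∧ (ℓ, true) ∈ S ∧
      ∀ v ∈ H.clauseVerts i j ℓ, v ≠ ℓ → (v, false) ∈ S}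

/-- The probability weight of `S`: `(1/2) ^ |V(H) \ Fix(S)|`. -/
noncomputable def weight (H : BTB V) (S : Finset (V × Bool)) : ℝ :=
  (1 / 2 : ℝ) ^ (Fintype.card V - (H.Fix S).ncard)

/-- The probability of the event `E` in the probability space on `SAT(H)`. -/
noncomputable def Pr (H : BTB V) (E : Finset (V × Bool) → Prop) : ℝ :=
  ∑ S ∈ H.SATH.filter E, H.weight S

/-- `|S \ Fix(S)|`: the number of literals of `S` that are not fixed. -/
noncomputable def nonFixedCount (H : BTB V) (S : Finset (V × Bool)) : ℕ :=
  (S.filter (fun l => ¬(l.2 = true ∧ l.1 ∈ H.Fix S))).card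

/-- `v` and `w` are siblings (in one of the trees of `H`). -/
def Sibling (H : BTB V) (v w : V) : Prop :=
  ∃ k, v ∈ (H.tree k).verts ∧ w ∈ (H.tree k).verts ∧
    v ≠ (H.tree k).root ∧ w ≠ (H.tree k).root ∧ v ≠ w ∧
    (H.tree k).parent v = (H.tree k).parent w

/-- `S` respects the pseudoedge `{t_i, t_j}`: all non-root variables of `C_{i,j}` occur
negatively in `S` and the siblings of all internal variables of `C_{i,j}` occur
positively in `S`. -/
def Respects (H : BTB V) (i j : Fin H.m) (S : Finset (V × Bool)) : Prop :=
  ∃ ℓ, H.IsCommonLeaf i j ℓ ∧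
    (∀ v ∈ H.clauseVerts i j ℓ,
      v ≠ (H.tree i).root → v ≠ (H.tree j).root → (v, false) ∈ S) ∧
    (∀ v ∈ H.clauseVerts i j ℓ,
      v ≠ (H.tree i).root → v ≠ (H.tree j).root → v ≠ ℓ →
      ∀ w, H.Sibling v w → (w, true) ∈ S)

/-- `S` is `η`-comfortable w.r.t. the pseudomatching `M`: `S` falsifies no clause of
`φ_H` and respects at least `η·|M|` pseudoedges of `M`. -/
noncomputable def Comfortable (H : BTB V) (M : Finset (Fin H.m × Fin H.m)) (η : ℝ)
    (S : Finset (V × Bool)) : Prop :=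
  H.FalsifiesNoClause S ∧
    η * M.card ≤ ((M.filter (fun e => H.Respects e.1 e.2 S)).card : ℝ)

/-- `S` is a guarded set of literals. -/
def Guarded (H : BTB V) (S : Finset (V × Bool)) : Prop :=
  Consistent S ∧ ∀ i j ℓ, H.IsCommonLeaf i j ℓ →
    ((ℓ, true) ∉ S ∧ (ℓ, false) ∉ S) ∨
    (∃ v ∈ H.clauseVerts i j ℓ, v ≠ ℓ ∧ (v, true) ∈ S) ∨
    ((ℓ, true) ∈ S ∧ ∀ v ∈ H.clauseVerts i j ℓ, v ≠ ℓ → (v, false) ∈ S)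

/-! #### Matching CNFs and matching OR-CNFs -/

/-- The 'half clause' `C^{1/2}_{i,j}`: the positive clause on the vertices of the path
from `t_i` (if `side = true`) or from `t_j` (if `side = false`) to the common leaf `ℓ`. -/
def halfClause (H : BTB V) (i j : Fin H.m) (ℓ : V) (side : Bool) : Finset (V × Bool) :=
  (if side then (H.tree i).pathVerts ℓ else (H.tree j).pathVerts ℓ).image (fun v => (v, true))

/-- The matching CNF w.r.t. `M` determined by the side choice `c`: one half clause per
pseudoedge of `M`.  The formulas of `CNF(M)` are exactly the CNFs `matchingCNF H M c`. -/
def matchingCNF (H : BTB V) (M : Finset (Fin H.m × Fin H.m))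
    (c : Fin H.m × Fin H.m → Bool) : Set (Finset (V × Bool)) :=
  {C | ∃ e ∈ M, ∃ ℓ, H.IsCommonLeaf e.1 e.2 ℓ ∧ C = H.halfClause e.1 e.2 ℓ (c e)}

/-- A matching OR-CNF w.r.t. `M` is determined by a map `Ψ` assigning to each assignment
`S₀` of the variables `V(H) \ ⋃M` a matching CNF (given by its side choice `Ψ S₀`);
the formula is `⋁_{S₀} (Conj(S₀) ∧ matchingCNF H M (Ψ S₀))`.  `S` satisfies it iff for
(the) `S₀ ⊆ S`, `S` satisfies the corresponding matching CNF. -/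
def SatORCNF (H : BTB V) (M : Finset (Fin H.m × Fin H.m))
    (Ψ : Finset (V × Bool) → (Fin H.m × Fin H.m) → Bool) (S : Finset (V × Bool)) : Prop :=
  ∃ S₀, AssignsExactly (Finset.univ \ H.matchingRoots M) S₀ ∧ S₀ ⊆ S ∧
    SatCNF (H.matchingCNF M (Ψ S₀)) S

/-- `X` is an `(a, b)`-determining set for the NBP `Z` computing `φ_H`. -/
def IsDeterminingSet (H : BTB V) (Z : NBP V) (a b : ℝ) (X : Finset (Fin Z.n)) : Prop :=
  (X.card : ℝ) ≤ a ∧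
  ∃ M : Finset (Fin H.m × Fin H.m), H.IsPseudomatching M ∧ b ≤ (M.card : ℝ) ∧
    ∃ Ψ : Finset (V × Bool) → (Fin H.m × Fin H.m) → Bool,
      ∀ p, Z.IsCompPath p → X ⊆ pathVertices p → H.SatORCNF M Ψ (pathLits p)

end BTB


section Aux


section Counting

variable {V : Type} [DecidableEq V] [Fintype V]

/-- Number of boolean assignments matching a fixed pattern on `K`. -/
lemma card_pattern (K : Finset V) (σ : V → Bool) :
    (Finset.univ.filter (fun A : V → Bool => ∀ x ∈ K, A x = σ x)).card
      = 2 ^ (Fintype.card V - K.card) := by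
  classical
  rw [← Fintype.card_subtype]
  have e : {A : V → Bool // ∀ x ∈ K, A x = σ x} ≃ ({x : V // x ∉ K} → Bool) :=
    { toFun := fun A x => A.1 x.1
      invFun := fun g => ⟨fun x => if hx : x ∈ K then σ x else g ⟨x, hx⟩, by
        intro x hx; simp [hx]⟩
      left_inv := by
        rintro ⟨A, hA⟩
        ext x
        dsimp
        split_ifs with hx
        · exact (hA x hx).symm
        · rfl
      right_inv := by
        intro g; funext x; simp [x.2] }
  rw [Fintype.card_congr e, Fintype.card_fun, Fintype.card_bool]
  congr 1
  have : Fintype.card {x : V // x ∉ K} = Fintype.card V - Fintype.card {x : V // x ∈ K} :=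
    Fintype.card_subtype_compl _
  rw [this, Fintype.card_coe]

/-- Splitting of sums for functions depending on disjoint coordinate sets. -/
lemma sum_mul_sum_split (D : Finset V) (F G : (V → Bool) → ℝ)
    (hF : ∀ A B : V → Bool, (∀ x ∈ D, A x = B x) → F A = F B)
    (hG : ∀ A B : V → Bool, (∀ x ∉ D, A x = B x) → G A = G B) :
    (∑ A : V → Bool, F A) * (∑ A : V → Bool, G A)
      = (2 ^ Fintype.card V : ℝ) * ∑ A : V → Bool, F A * G A := by
  classical
  set φ : ((V → Bool) × (V → Bool)) → ((V → Bool) × (V → Bool)) :=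
    fun p => (fun x => if x ∈ D then p.1 x else p.2 x,
              fun x => if x ∈ D then p.2 x else p.1 x) with hφ
  have hinv : Function.Involutive φ := by
    rintro ⟨A, B⟩
    refine Prod.ext ?_ ?_ <;> · funext x; by_cases hx : x ∈ D <;> simp [hφ, hx]
  have key : ∑ p : (V → Bool) × (V → Bool), F p.1 * G p.2
      = ∑ p : (V → Bool) × (V → Bool), F p.1 * G p.1 := by
    refine (Fintype.sum_bijective φ hinv.bijective _ _ fun p => ?_).symm
    have h1 : F (φ p).1 = F p.1 := hF _ _ (fun x hx => by
      rw [hφ]; exact if_pos hx)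
    have h2 : G (φ p).2 = G p.1 := hG _ _ (fun x hx => by
      rw [hφ]; exact if_neg hx)
    rw [h1, h2]
  have lhs : (∑ A : V → Bool, F A) * (∑ A : V → Bool, G A)
      = ∑ p : (V → Bool) × (V → Bool), F p.1 * G p.2 := by
    rw [Fintype.sum_prod_type, Finset.sum_mul_sum]
  have rhs : ∑ p : (V → Bool) × (V → Bool), F p.1 * G p.1
      = (2 ^ Fintype.card V : ℝ) * ∑ A : V → Bool, F A * G A := by
    rw [Fintype.sum_prod_type]
    simp only [Finset.sum_const, nsmul_eq_mul]
    rw [← Finset.mul_sum, Finset.card_univ, Fintype.card_fun, Fintype.card_bool]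
    push_cast
    ring
  rw [lhs, key, rhs]

/-- Factorization of the expectation of a product of functions with pairwise
disjoint dependency sets. -/
lemma prod_factorization {ι : Type*} [Fintype ι] (D : ι → Finset V)
    (hdisj : ∀ e f : ι, e ≠ f → Disjoint (D e) (D f))
    (w : ι → (V → Bool) → ℝ)
    (hw : ∀ (e : ι) (A B : V → Bool), (∀ x ∈ D e, A x = B x) → w e A = w e B)
    (s : Finset ι) :
    ((2:ℝ) ^ Fintype.card V) ^ s.card * ∑ A : V → Bool, ∏ e ∈ s, w e A
      = (2 ^ Fintype.card V : ℝ) * ∏ e ∈ s, ∑ A : V → Bool, w e A := by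
  classical
  induction s using Finset.induction_on with
  | empty => simp
  | @insert a s ha ih =>
    have hG : ∀ A B : V → Bool, (∀ x ∉ D a, A x = B x) → (∏ e ∈ s, w e A) = ∏ e ∈ s, w e B := by
      intro A B hAB
      refine Finset.prod_congr rfl fun e he => ?_
      refine hw e A B fun x hx => hAB x fun hxa => ?_
      have hne : e ≠ a := by rintro rfl; exact ha he
      exact (Finset.disjoint_left.mp (hdisj e a hne)) hx hxa
    have core := sum_mul_sum_split (D a) (w a) (fun A => ∏ e ∈ s, w e A)
      (fun A B h => hw a A B h) hG
    rw [Finset.card_insert_of_notMem ha, Finset.prod_insert ha]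
    have hsum : ∑ A : V → Bool, ∏ e ∈ insert a s, w e A
        = ∑ A : V → Bool, w a A * ∏ e ∈ s, w e A := by
      refine Finset.sum_congr rfl fun A _ => ?_
      rw [Finset.prod_insert ha]
    rw [hsum, pow_succ]
    calc ((2:ℝ) ^ Fintype.card V) ^ s.card * 2 ^ Fintype.card V
          * ∑ A : V → Bool, w a A * ∏ e ∈ s, w e A
        = ((2:ℝ) ^ Fintype.card V) ^ s.card
          * ((2 ^ Fintype.card V : ℝ) * ∑ A : V → Bool, w a A * ∏ e ∈ s, w e A) := by ring
      _ = ((2:ℝ) ^ Fintype.card V) ^ s.card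
          * ((∑ A : V → Bool, w a A) * ∑ A : V → Bool, ∏ e ∈ s, w e A) := by rw [← core]
      _ = (∑ A : V → Bool, w a A)
          * (((2:ℝ) ^ Fintype.card V) ^ s.card * ∑ A : V → Bool, ∏ e ∈ s, w e A) := by ring
      _ = (∑ A : V → Bool, w a A) * ((2 ^ Fintype.card V : ℝ) * ∏ e ∈ s, ∑ A : V → Bool, w e A) := by
          rw [ih]
      _ = (2 ^ Fintype.card V : ℝ) * ((∑ A : V → Bool, w a A) * ∏ e ∈ s, ∑ A : V → Bool, w e A) := by
          ring

end Counting


namespace RootedTree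

variable {V : Type} [DecidableEq V] (T : RootedTree V)

lemma eq_root_of_depth_eq_zero {v : V} (hv : v ∈ T.verts) (h : T.depth v = 0) :
    v = T.root := by
  by_contra hne
  have := T.depth_parent v hv hne
  omega

lemma iterate_parent_spec {ℓ : V} (hℓ : ℓ ∈ T.verts) :
    ∀ k, k ≤ T.depth ℓ →
      T.parent^[k] ℓ ∈ T.verts ∧ T.depth (T.parent^[k] ℓ) = T.depth ℓ - k := by
  intro k
  induction k with
  | zero => intro _; exact ⟨by simpa using hℓ, by simp⟩
  | succ k ih =>
    intro hk
    obtain ⟨hm, hd⟩ := ih (by omega)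
    have hne : T.parent^[k] ℓ ≠ T.root := by
      intro h
      rw [h, T.depth_root] at hd
      omega
    have hdp := T.depth_parent _ hm hne
    rw [Function.iterate_succ_apply']
    exact ⟨T.parent_mem _ hm hne, by omega⟩

lemma mem_pathVerts_iff {ℓ v : V} :
    v ∈ T.pathVerts ℓ ↔ ∃ k, k ≤ T.depth ℓ ∧ v = T.parent^[k] ℓ := by
  unfold pathVerts
  simp [Finset.mem_image, Finset.mem_range, Nat.lt_succ_iff, eq_comm]

lemma self_mem_pathVerts (ℓ : V) : ℓ ∈ T.pathVerts ℓ :=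
  (T.mem_pathVerts_iff).mpr ⟨0, Nat.zero_le _, rfl⟩

lemma pathVerts_subset {ℓ : V} (hℓ : ℓ ∈ T.verts) : T.pathVerts ℓ ⊆ T.verts := by
  intro v hv
  obtain ⟨k, hk, rfl⟩ := (T.mem_pathVerts_iff).mp hv
  exact (T.iterate_parent_spec hℓ k hk).1

lemma root_mem_pathVerts {ℓ : V} (hℓ : ℓ ∈ T.verts) : T.root ∈ T.pathVerts ℓ := by
  obtain ⟨hm, hd⟩ := T.iterate_parent_spec hℓ (T.depth ℓ) le_rfl
  have : T.parent^[T.depth ℓ] ℓ = T.root :=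
    T.eq_root_of_depth_eq_zero hm (by omega)
  rw [← this]
  exact (T.mem_pathVerts_iff).mpr ⟨T.depth ℓ, le_rfl, rfl⟩

lemma not_leaf_of_mem_pathVerts {ℓ v : V} (hℓ : ℓ ∈ T.verts)
    (hv : v ∈ T.pathVerts ℓ) (hne : v ≠ ℓ) : v ∉ T.leaves := by
  obtain ⟨k, hk, rfl⟩ := (T.mem_pathVerts_iff).mp hv
  have hk0 : k ≠ 0 := by rintro rfl; exact hne rfl
  obtain ⟨hcm, hcd⟩ := T.iterate_parent_spec hℓ (k-1) (by omega)
  obtain ⟨hvm, hvd⟩ := T.iterate_parent_spec hℓ k hk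
  have hdpos : 0 < T.depth ℓ := by omega
  have hcroot : T.parent^[k-1] ℓ ≠ T.root := by
    intro h
    rw [h, T.depth_root] at hcd
    omega
  have hpc : T.parent (T.parent^[k-1] ℓ) = T.parent^[k] ℓ := by
    have hk' : k - 1 + 1 = k := by omega
    conv_rhs => rw [← hk']
    rw [Function.iterate_succ_apply']
  intro hleaf
  rw [leaves, Finset.mem_filter] at hleaf
  have hmem : T.parent^[k-1] ℓ ∈ T.children (T.parent^[k] ℓ) := by
    rw [children, Finset.mem_filter]
    exact ⟨hcm, hcroot, hpc⟩
  rw [hleaf.2] at hmem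
  exact absurd hmem (Finset.notMem_empty _)

lemma card_pathVerts_le (ℓ : V) : (T.pathVerts ℓ).card ≤ T.depth ℓ + 1 := by
  unfold pathVerts
  exact (Finset.card_image_le).trans (by rw [Finset.card_range])

lemma pathVerts_of_depth_zero {ℓ : V} (h : T.depth ℓ = 0) : T.pathVerts ℓ = {ℓ} := by
  unfold pathVerts
  rw [h]
  simp

lemma verts_eq_singleton_of_root_leaf (h : T.root ∈ T.leaves) : T.verts = {T.root} := by
  have hchild : T.children T.root = ∅ := (Finset.mem_filter.mp h).2
  have key : ∀ n, ∀ v ∈ T.verts, T.depth v ≤ n → v = T.root := by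
    intro n
    induction n with
    | zero =>
      intro v hv h0
      exact T.eq_root_of_depth_eq_zero hv (Nat.le_zero.mp h0)
    | succ n ih =>
      intro v hv hd
      by_cases hne : v = T.root
      · exact hne
      · have hp := T.depth_parent v hv hne
        have hpm := T.parent_mem v hv hne
        have hroot : T.parent v = T.root := ih _ hpm (by omega)
        have : v ∈ T.children T.root := Finset.mem_filter.mpr ⟨hv, hne, hroot⟩
        rw [hchild] at this
        exact absurd this (Finset.notMem_empty _)
  ext v
  simp only [Finset.mem_singleton]
  constructor
  · intro hv
    exact key (T.depth v) v hv le_rfl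
  · rintro rfl
    exact T.root_mem

lemma depth_le_of_mem {v : V} (hv : v ∈ T.verts) : T.depth v + 1 ≤ T.height :=
  Nat.succ_le_succ (Finset.le_sup hv)

lemma mem_verts_of_leaf {v : V} (h : v ∈ T.leaves) : v ∈ T.verts :=
  (Finset.mem_filter.mp h).1

end RootedTree

namespace BTB

variable {V : Type} [DecidableEq V] [Fintype V] (H : BTB V)

lemma leaf_of_mem_mem {i j : Fin H.m} (hij : i ≠ j) {v : V}
    (hi : v ∈ (H.tree i).verts) (hj : v ∈ (H.tree j).verts) :
    v ∈ (H.tree i).leaves :=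
  (H.common_leaf i j hij v hi hj).1

lemma IsCommonLeaf.symm {H : BTB V} {i j : Fin H.m} {ℓ : V}
    (h : H.IsCommonLeaf i j ℓ) : H.IsCommonLeaf j i ℓ :=
  ⟨h.1.symm, h.2.2, h.2.1⟩

lemma leafSet_eq {i j : Fin H.m} {ℓ : V} (h : H.IsCommonLeaf i j ℓ) :
    Finset.univ.filter (fun k => ℓ ∈ (H.tree k).leaves) = {i, j} := by
  obtain ⟨hij, hi, hj⟩ := h
  have hsub : ({i, j} : Finset (Fin H.m))
      ⊆ Finset.univ.filter (fun k => ℓ ∈ (H.tree k).leaves) := by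
    intro k hk
    rcases Finset.mem_insert.mp hk with rfl | hk
    · exact Finset.mem_filter.mpr ⟨Finset.mem_univ _, hi⟩
    · rw [Finset.mem_singleton] at hk
      subst hk
      exact Finset.mem_filter.mpr ⟨Finset.mem_univ _, hj⟩
  have hcard := H.leaf_two i ℓ hi
  have hc2 : ({i, j} : Finset (Fin H.m)).card = 2 := by
    rw [Finset.card_insert_of_notMem (by simpa using hij), Finset.card_singleton]
  exact (Finset.eq_of_subset_of_card_le hsub (by rw [hcard, hc2])).symm

lemma commonLeaf_pair {i j a b : Fin H.m} {ℓ : V} (h : H.IsCommonLeaf i j ℓ)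
    (h' : H.IsCommonLeaf a b ℓ) : (a = i ∧ b = j) ∨ (a = j ∧ b = i) := by
  have hset := H.leafSet_eq h
  obtain ⟨hab, ha, hb⟩ := h'
  have haf : a ∈ ({i, j} : Finset (Fin H.m)) := by
    rw [← hset]
    exact Finset.mem_filter.mpr ⟨Finset.mem_univ _, ha⟩
  have hbf : b ∈ ({i, j} : Finset (Fin H.m)) := by
    rw [← hset]
    exact Finset.mem_filter.mpr ⟨Finset.mem_univ _, hb⟩
  simp only [Finset.mem_insert, Finset.mem_singleton] at haf hbf
  rcases haf with rfl | rfl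
  · rcases hbf with rfl | rfl
    · exact absurd rfl hab
    · exact Or.inl ⟨rfl, rfl⟩
  · rcases hbf with rfl | rfl
    · exact Or.inr ⟨rfl, rfl⟩
    · exact absurd rfl hab

/-- `v` belongs to the tree `T_k` and to no other tree, and is not a leaf. -/
def OnlyIn (H : BTB V) (k : Fin H.m) (v : V) : Prop :=
  v ∈ (H.tree k).verts ∧ v ∉ (H.tree k).leaves ∧ ∀ k', k' ≠ k → v ∉ (H.tree k').verts

lemma onlyIn_of_not_leaf {k : Fin H.m} {v : V} (hv : v ∈ (H.tree k).verts)
    (hl : v ∉ (H.tree k).leaves) : H.OnlyIn k v := by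
  refine ⟨hv, hl, fun k' hk' hv' => hl (H.leaf_of_mem_mem (fun h => hk' h.symm) hv hv')⟩

lemma OnlyIn.not_commonLeaf {H : BTB V} {k : Fin H.m} {v : V} (h : H.OnlyIn k v) :
    ∀ a b, ¬ H.IsCommonLeaf a b v := by
  rintro a b ⟨hab, ha, hb⟩
  by_cases hak : a = k
  · exact h.2.1 (hak ▸ ha)
  · exact h.2.2 a hak (RootedTree.mem_verts_of_leaf _ ha)

lemma OnlyIn.not_mem_fix {H : BTB V} {k : Fin H.m} {v : V} (h : H.OnlyIn k v)
    (S : Finset (V × Bool)) : v ∉ H.Fix S := by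
  intro hv
  obtain ⟨a, b, hcl, -, -⟩ := hv
  exact h.not_commonLeaf a b hcl

/-- Internal (non-root, non-leaf) variables of the clause `C_{i,j}`. -/
def interior (H : BTB V) (i j : Fin H.m) (ℓ : V) : Finset V :=
  ((H.tree i).pathVerts ℓ ∪ (H.tree j).pathVerts ℓ)
    \ {(H.tree i).root, (H.tree j).root, ℓ}

/-- The siblings of the internal variables of the clause `C_{i,j}`. -/
noncomputable def sibs (H : BTB V) (i j : Fin H.m) (ℓ : V) : Finset V :=
  ((H.tree i).verts ∪ (H.tree j).verts).filter
    (fun w => ∃ v ∈ H.interior i j ℓ, H.Sibling v w)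

/-- The dependency set of the event `R_{i,j}`. -/
noncomputable def Dset (H : BTB V) (i j : Fin H.m) (ℓ : V) : Finset V :=
  (H.interior i j ℓ ∪ H.sibs i j ℓ) ∪ {ℓ, (H.tree i).root, (H.tree j).root}

/-- The event on total assignments forcing `S` to respect `{t_i, t_j}`. -/
def Rpred (H : BTB V) (i j : Fin H.m) (ℓ : V) (A : V → Bool) : Prop :=
  (∀ v ∈ H.interior i j ℓ, A v = false ∧ ∀ w, H.Sibling v w → A w = true) ∧
  (ℓ ≠ (H.tree i).root → ℓ ≠ (H.tree j).root →
    (A ℓ = false ∧ (A ((H.tree i).root) = true ∨ A ((H.tree j).root) = true)))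

variable {i j : Fin H.m} {ℓ : V}

lemma interior_not_mem {v : V} (hv : v ∈ H.interior i j ℓ) :
    v ≠ (H.tree i).root ∧ v ≠ (H.tree j).root ∧ v ≠ ℓ := by
  have := (Finset.mem_sdiff.mp hv).2
  simp only [Finset.mem_insert, Finset.mem_singleton] at this
  push_neg at this
  exact this

lemma interior_spec (hcl : H.IsCommonLeaf i j ℓ) {v : V} (hv : v ∈ H.interior i j ℓ) :
    (v ∈ (H.tree i).pathVerts ℓ ∧ H.OnlyIn i v) ∨
      (v ∈ (H.tree j).pathVerts ℓ ∧ H.OnlyIn j v) := by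
  obtain ⟨hij, hi, hj⟩ := hcl
  have hne : v ≠ ℓ := (H.interior_not_mem hv).2.2
  rw [interior, Finset.mem_sdiff, Finset.mem_union] at hv
  rcases hv.1 with hpath | hpath
  · left
    refine ⟨hpath, ?_⟩
    have hvm := (H.tree i).pathVerts_subset (RootedTree.mem_verts_of_leaf _ hi) hpath
    have hnl := (H.tree i).not_leaf_of_mem_pathVerts (RootedTree.mem_verts_of_leaf _ hi) hpath hne
    exact H.onlyIn_of_not_leaf hvm hnl
  · right
    refine ⟨hpath, ?_⟩
    have hvm := (H.tree j).pathVerts_subset (RootedTree.mem_verts_of_leaf _ hj) hpath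
    have hnl := (H.tree j).not_leaf_of_mem_pathVerts (RootedTree.mem_verts_of_leaf _ hj) hpath hne
    exact H.onlyIn_of_not_leaf hvm hnl

lemma sibling_spec (hcl : H.IsCommonLeaf i j ℓ) {v w : V}
    (hv : v ∈ H.interior i j ℓ) (hs : H.Sibling v w) :
    ∃ k, (k = i ∨ k = j) ∧ v ∈ (H.tree k).pathVerts ℓ ∧
      w ∈ (H.tree k).verts ∧ w ≠ (H.tree k).root ∧ w ≠ v ∧
      (H.tree k).parent w = (H.tree k).parent v ∧ v ≠ (H.tree k).root ∧
      w ∉ (H.tree k).leaves := by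
  obtain ⟨k, hvk, hwk, hvr, hwr, hvw, hpar⟩ := hs
  have hspec := H.interior_spec hcl hv
  have hk : (k = i ∨ k = j) ∧ v ∈ (H.tree k).pathVerts ℓ := by
    rcases hspec with ⟨hp, ho⟩ | ⟨hp, ho⟩
    · have : k = i := by
        by_contra hki
        exact ho.2.2 k hki hvk
      exact ⟨Or.inl this, this ▸ hp⟩
    · have : k = j := by
        by_contra hkj
        exact ho.2.2 k hkj hvk
      exact ⟨Or.inr this, this ▸ hp⟩
  have hwl : w ∉ (H.tree k).leaves := by
    intro hleaf
    have hch : (H.tree k).children w = ∅ := (Finset.mem_filter.mp hleaf).2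
    have hext := H.extended k w hwk hwr hch
    have : v ∈ (H.tree k).children ((H.tree k).parent w) := by
      rw [RootedTree.children, Finset.mem_filter]
      exact ⟨hvk, hvr, hpar⟩
    rw [hext, Finset.mem_singleton] at this
    exact hvw this
  exact ⟨k, hk.1, hk.2, hwk, hwr, fun h => hvw h.symm, hpar.symm, hvr, hwl⟩

lemma mem_sibs_of_sibling (hcl : H.IsCommonLeaf i j ℓ) {v w : V}
    (hv : v ∈ H.interior i j ℓ) (hs : H.Sibling v w) : w ∈ H.sibs i j ℓ := by
  obtain ⟨k, hk, -, hwk, -, -, -, -, -⟩ := H.sibling_spec hcl hv hs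
  refine Finset.mem_filter.mpr ⟨Finset.mem_union.mpr ?_, v, hv, hs⟩
  rcases hk with rfl | rfl
  · exact Or.inl hwk
  · exact Or.inr hwk

lemma sibs_spec (hcl : H.IsCommonLeaf i j ℓ) {w : V} (hw : w ∈ H.sibs i j ℓ) :
    ∃ k, (k = i ∨ k = j) ∧ H.OnlyIn k w ∧ w ≠ (H.tree k).root := by
  obtain ⟨-, v, hv, hs⟩ := Finset.mem_filter.mp hw
  obtain ⟨k, hk, -, hwk, hwr, -, -, -, hwl⟩ := H.sibling_spec hcl hv hs
  exact ⟨k, hk, H.onlyIn_of_not_leaf hwk hwl, hwr⟩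

lemma root_i_not_mem_sibs (hcl : H.IsCommonLeaf i j ℓ) :
    (H.tree i).root ∉ H.sibs i j ℓ := by
  intro hw
  obtain ⟨k, hk, ho, hr⟩ := H.sibs_spec hcl hw
  rcases hk with rfl | rfl
  · exact hr rfl
  · exact ho.2.2 i hcl.1 ((H.tree i).root_mem)

lemma root_j_not_mem_sibs (hcl : H.IsCommonLeaf i j ℓ) :
    (H.tree j).root ∉ H.sibs i j ℓ := by
  intro hw
  obtain ⟨k, hk, ho, hr⟩ := H.sibs_spec hcl hw
  rcases hk with rfl | rfl
  · exact ho.2.2 j hcl.1.symm ((H.tree j).root_mem)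
  · exact hr rfl

lemma leaf_not_mem_sibs (hcl : H.IsCommonLeaf i j ℓ) : ℓ ∉ H.sibs i j ℓ := by
  intro hw
  obtain ⟨k, hk, ho, -⟩ := H.sibs_spec hcl hw
  rcases hk with rfl | rfl
  · exact ho.2.1 hcl.2.1
  · exact ho.2.1 hcl.2.2

lemma mem_pathVerts_of_interior (hcl : H.IsCommonLeaf i j ℓ) {k : Fin H.m} {v : V}
    (hk : k = i ∨ k = j) (hv : v ∈ H.interior i j ℓ) (hvk : v ∈ (H.tree k).verts) :
    v ∈ (H.tree k).pathVerts ℓ := by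
  rcases H.interior_spec hcl hv with ⟨hp, ho⟩ | ⟨hp, ho⟩ <;>
  · first
    | (have : k = i := by by_contra h; exact ho.2.2 k h hvk)
    | (have : k = j := by by_contra h; exact ho.2.2 k h hvk)
    subst this
    exact hp

lemma interior_not_mem_sibs (hcl : H.IsCommonLeaf i j ℓ) {v : V}
    (hv : v ∈ H.interior i j ℓ) : v ∉ H.sibs i j ℓ := by
  intro hw
  obtain ⟨-, v₀, hv₀, hs⟩ := Finset.mem_filter.mp hw
  obtain ⟨k, hk, hp₀, hvk, hvr, hvv₀, hpar, hv₀r, -⟩ := H.sibling_spec hcl hv₀ hs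
  have hp : v ∈ (H.tree k).pathVerts ℓ := H.mem_pathVerts_of_interior hcl hk hv hvk
  set T := H.tree k
  have hℓT : ℓ ∈ T.verts := by
    rcases hk with rfl | rfl
    · exact RootedTree.mem_verts_of_leaf _ hcl.2.1
    · exact RootedTree.mem_verts_of_leaf _ hcl.2.2
  obtain ⟨a, ha, hva⟩ := T.mem_pathVerts_iff.mp hp
  obtain ⟨b, hb, hvb⟩ := T.mem_pathVerts_iff.mp hp₀
  obtain ⟨hma, hda⟩ := T.iterate_parent_spec hℓT a ha
  obtain ⟨hmb, hdb⟩ := T.iterate_parent_spec hℓT b hb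
  have hdv := T.depth_parent v hvk hvr
  have hdv₀ : T.depth v₀ = T.depth (T.parent v₀) + 1 := by
    apply T.depth_parent v₀ _ hv₀r
    rw [hvb]
    exact hmb
  rw [hpar] at hdv
  have hdep : T.depth v = T.depth v₀ := by omega
  rw [hva, hvb, hda] at hdep
  rw [hdb] at hdep
  have hab : a = b := by omega
  exact hvv₀ (by rw [hva, hvb, hab])

lemma sibs_card_le (hcl : H.IsCommonLeaf i j ℓ) :
    (H.sibs i j ℓ).card ≤ (H.interior i j ℓ).card := by
  classical
  apply Finset.card_le_card_of_injOn
    (f := fun w => if h : ∃ v ∈ H.interior i j ℓ, H.Sibling v w then h.choose else w)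
  · intro w hw
    have h := (Finset.mem_filter.mp hw).2
    dsimp only; rw [dif_pos h]
    exact h.choose_spec.1
  · intro w₁ h₁ w₂ h₂ heq
    by_contra hne
    have e₁ := (Finset.mem_filter.mp h₁).2
    have e₂ := (Finset.mem_filter.mp h₂).2
    dsimp only at heq
    rw [dif_pos e₁, dif_pos e₂] at heq
    obtain ⟨hv₁I, hs₁⟩ := e₁.choose_spec
    obtain ⟨hv₂I, hs₂⟩ := e₂.choose_spec
    rw [heq] at hv₁I hs₁
    set v := e₂.choose with hv
    obtain ⟨k, hk, hp, hw₁k, hw₁r, hw₁v, hpar₁, hvr, -⟩ := H.sibling_spec hcl hv₁I hs₁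
    obtain ⟨k', hk', hp', hw₂k, hw₂r, hw₂v, hpar₂, -, -⟩ := H.sibling_spec hcl hv₂I hs₂
    -- the trees coincide since `v` lies in a unique tree
    have hkk : k' = k := by
      rcases H.interior_spec hcl hv₂I with ⟨-, ho⟩ | ⟨-, ho⟩
      · have h1 : k = i := by
          by_contra h
          exact ho.2.2 k h ((H.tree k).pathVerts_subset (by
            rcases hk with rfl | rfl
            · exact RootedTree.mem_verts_of_leaf _ hcl.2.1
            · exact RootedTree.mem_verts_of_leaf _ hcl.2.2) hp)
        have h2 : k' = i := by
          by_contra h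
          exact ho.2.2 k' h ((H.tree k').pathVerts_subset (by
            rcases hk' with rfl | rfl
            · exact RootedTree.mem_verts_of_leaf _ hcl.2.1
            · exact RootedTree.mem_verts_of_leaf _ hcl.2.2) hp')
        rw [h1, h2]
      · have h1 : k = j := by
          by_contra h
          exact ho.2.2 k h ((H.tree k).pathVerts_subset (by
            rcases hk with rfl | rfl
            · exact RootedTree.mem_verts_of_leaf _ hcl.2.1
            · exact RootedTree.mem_verts_of_leaf _ hcl.2.2) hp)
        have h2 : k' = j := by
          by_contra h
          exact ho.2.2 k' h ((H.tree k').pathVerts_subset (by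
            rcases hk' with rfl | rfl
            · exact RootedTree.mem_verts_of_leaf _ hcl.2.1
            · exact RootedTree.mem_verts_of_leaf _ hcl.2.2) hp')
        rw [h1, h2]
    rw [hkk] at hp' hw₂k hw₂r hpar₂
    set T := H.tree k
    have hvmem : v ∈ T.verts := T.pathVerts_subset (by
      rcases hk with rfl | rfl
      · exact RootedTree.mem_verts_of_leaf _ hcl.2.1
      · exact RootedTree.mem_verts_of_leaf _ hcl.2.2) hp
    have humem : T.parent v ∈ T.verts := T.parent_mem v hvmem hvr
    have hbin := H.binary k (T.parent v) humem
    have hsub : ({v, w₁, w₂} : Finset V) ⊆ T.children (T.parent v) := by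
      intro x hx
      simp only [Finset.mem_insert, Finset.mem_singleton] at hx
      rcases hx with rfl | rfl | rfl
      · exact Finset.mem_filter.mpr ⟨hvmem, hvr, rfl⟩
      · exact Finset.mem_filter.mpr ⟨hw₁k, hw₁r, hpar₁⟩
      · exact Finset.mem_filter.mpr ⟨hw₂k, hw₂r, hpar₂⟩
    have hc3 : ({v, w₁, w₂} : Finset V).card = 3 := by
      rw [Finset.card_insert_of_notMem (by simp [hw₁v.symm, hw₂v.symm]),
        Finset.card_insert_of_notMem (by simpa using hne), Finset.card_singleton]
    have := (Finset.card_le_card hsub).trans hbin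
    omega

lemma root_commonLeaf_i (hcl : H.IsCommonLeaf i j ℓ) {a b : Fin H.m}
    (h : H.IsCommonLeaf a b ((H.tree i).root)) : (H.tree i).root = ℓ := by
  have hri : (H.tree i).root ∈ (H.tree i).leaves := by
    obtain ⟨hab, ha, hb⟩ := h
    by_cases hai : a = i
    · exact hai ▸ ha
    · exact H.leaf_of_mem_mem (fun hh => hai hh.symm) ((H.tree i).root_mem)
        (RootedTree.mem_verts_of_leaf _ ha)
  have hsingle := (H.tree i).verts_eq_singleton_of_root_leaf hri
  have hℓv : ℓ ∈ (H.tree i).verts := RootedTree.mem_verts_of_leaf _ hcl.2.1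
  rw [hsingle, Finset.mem_singleton] at hℓv
  exact hℓv.symm

lemma Dset_spec (hcl : H.IsCommonLeaf i j ℓ) {x : V} (hx : x ∈ H.Dset i j ℓ) :
    (x ∈ (H.tree i).verts ∨ x ∈ (H.tree j).verts) ∧
    (∀ a b, H.IsCommonLeaf a b x → ((a = i ∧ b = j) ∨ (a = j ∧ b = i))) := by
  rw [Dset, Finset.mem_union, Finset.mem_union] at hx
  rcases hx with (hx | hx) | hx
  · rcases H.interior_spec hcl hx with ⟨-, ho⟩ | ⟨-, ho⟩
    · exact ⟨Or.inl ho.1, fun a b hab => absurd hab (ho.not_commonLeaf a b)⟩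
    · exact ⟨Or.inr ho.1, fun a b hab => absurd hab (ho.not_commonLeaf a b)⟩
  · obtain ⟨k, hk, ho, -⟩ := H.sibs_spec hcl hx
    refine ⟨?_, fun a b hab => absurd hab (ho.not_commonLeaf a b)⟩
    rcases hk with rfl | rfl
    · exact Or.inl ho.1
    · exact Or.inr ho.1
  · simp only [Finset.mem_insert, Finset.mem_singleton] at hx
    rcases hx with rfl | rfl | rfl
    · exact ⟨Or.inl (RootedTree.mem_verts_of_leaf _ hcl.2.1),
        fun a b hab => H.commonLeaf_pair hcl hab⟩
    · refine ⟨Or.inl ((H.tree i).root_mem), fun a b hab => ?_⟩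
      have := H.root_commonLeaf_i hcl hab
      rw [this] at hab
      exact H.commonLeaf_pair hcl hab
    · refine ⟨Or.inr ((H.tree j).root_mem), fun a b hab => ?_⟩
      have := H.root_commonLeaf_i hcl.symm hab
      rw [this] at hab
      rcases H.commonLeaf_pair hcl.symm hab with ⟨rfl, rfl⟩ | ⟨rfl, rfl⟩
      · exact Or.inr ⟨rfl, rfl⟩
      · exact Or.inl ⟨rfl, rfl⟩

lemma Dset_disjoint {i j i' j' : Fin H.m} {ℓ ℓ' : V}
    (hcl : H.IsCommonLeaf i j ℓ) (hcl' : H.IsCommonLeaf i' j' ℓ')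
    (h1 : i ≠ i') (h2 : i ≠ j') (h3 : j ≠ i') (h4 : j ≠ j') :
    Disjoint (H.Dset i j ℓ) (H.Dset i' j' ℓ') := by
  rw [Finset.disjoint_left]
  intro x hx hx'
  obtain ⟨hv, hcls⟩ := H.Dset_spec hcl hx
  obtain ⟨hv', hcls'⟩ := H.Dset_spec hcl' hx'
  obtain ⟨a, ha, hav⟩ : ∃ a, (a = i ∨ a = j) ∧ x ∈ (H.tree a).verts := by
    rcases hv with h | h
    · exact ⟨i, Or.inl rfl, h⟩
    · exact ⟨j, Or.inr rfl, h⟩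
  obtain ⟨b, hb, hbv⟩ : ∃ b, (b = i' ∨ b = j') ∧ x ∈ (H.tree b).verts := by
    rcases hv' with h | h
    · exact ⟨i', Or.inl rfl, h⟩
    · exact ⟨j', Or.inr rfl, h⟩
  have hab : a ≠ b := by
    rcases ha with rfl | rfl <;> rcases hb with rfl | rfl <;> assumption
  have hclab : H.IsCommonLeaf a b x :=
    ⟨hab, H.leaf_of_mem_mem hab hav hbv, H.leaf_of_mem_mem hab.symm hbv hav⟩
  have hres := hcls a b hclab
  rcases hb with rfl | rfl <;> rcases hres with ⟨-, rfl⟩ | ⟨-, rfl⟩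
  · exact h3 rfl
  · exact h1 rfl
  · exact h4 rfl
  · exact h2 rfl

lemma interior_subset_Dset : H.interior i j ℓ ⊆ H.Dset i j ℓ := by
  intro x hx
  exact Finset.mem_union.mpr (Or.inl (Finset.mem_union.mpr (Or.inl hx)))

lemma sibs_subset_Dset : H.sibs i j ℓ ⊆ H.Dset i j ℓ := by
  intro x hx
  exact Finset.mem_union.mpr (Or.inl (Finset.mem_union.mpr (Or.inr hx)))

lemma triple_subset_Dset :
    ℓ ∈ H.Dset i j ℓ ∧ (H.tree i).root ∈ H.Dset i j ℓ ∧ (H.tree j).root ∈ H.Dset i j ℓ := by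
  refine ⟨?_, ?_, ?_⟩ <;> exact Finset.mem_union.mpr (Or.inr (by simp))

lemma Rpred_congr (hcl : H.IsCommonLeaf i j ℓ) {A B : V → Bool}
    (hAB : ∀ x ∈ H.Dset i j ℓ, A x = B x) (hR : H.Rpred i j ℓ A) :
    H.Rpred i j ℓ B := by
  obtain ⟨h1, h2⟩ := hR
  constructor
  · intro v hv
    obtain ⟨hval, hsib⟩ := h1 v hv
    refine ⟨by rw [← hAB v (H.interior_subset_Dset hv)]; exact hval, ?_⟩
    intro w hw
    rw [← hAB w (H.sibs_subset_Dset (H.mem_sibs_of_sibling hcl hv hw))]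
    exact hsib w hw
  · intro hi hj
    obtain ⟨hl, hr⟩ := h2 hi hj
    obtain ⟨m1, m2, m3⟩ := H.triple_subset_Dset (i := i) (j := j) (ℓ := ℓ)
    refine ⟨by rw [← hAB ℓ m1]; exact hl, ?_⟩
    rcases hr with h | h
    · exact Or.inl (by rw [← hAB _ m2]; exact h)
    · exact Or.inr (by rw [← hAB _ m3]; exact h)

end BTB

section Patterns

variable {V : Type} [DecidableEq V] [Fintype V]

lemma pattern_subset_count (K : Finset V) (σ : V → Bool) (P : (V → Bool) → Prop)
    (h : ∀ A : V → Bool, (∀ x ∈ K, A x = σ x) → P A) :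
    2 ^ (Fintype.card V - K.card) ≤ (Finset.univ.filter (fun A : V → Bool => P A)).card := by
  classical
  rw [← card_pattern K σ]
  apply Finset.card_le_card
  intro A hA
  exact Finset.mem_filter.mpr ⟨Finset.mem_univ _, h A (Finset.mem_filter.mp hA).2⟩

lemma three_patterns (K : Finset V) (σ : Bool → Bool → V → Bool) (P : (V → Bool) → Prop)
    (u v : V) (hu : u ∈ K) (hv : v ∈ K)
    (hσu : ∀ b₁ b₂, σ b₁ b₂ u = b₁) (hσv : ∀ b₁ b₂, σ b₁ b₂ v = b₂)
    (h : ∀ b₁ b₂, (b₁ = true ∨ b₂ = true) → ∀ A : V → Bool,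
      (∀ x ∈ K, A x = σ b₁ b₂ x) → P A) :
    3 * 2 ^ (Fintype.card V - K.card)
      ≤ (Finset.univ.filter (fun A : V → Bool => P A)).card := by
  classical
  set Pat : Bool → Bool → Finset (V → Bool) :=
    fun b₁ b₂ => Finset.univ.filter (fun A : V → Bool => ∀ x ∈ K, A x = σ b₁ b₂ x) with hPat
  have hcard : ∀ b₁ b₂, (Pat b₁ b₂).card = 2 ^ (Fintype.card V - K.card) :=
    fun b₁ b₂ => card_pattern K (σ b₁ b₂)
  have hdisj : ∀ b₁ b₂ b₁' b₂', (b₁, b₂) ≠ (b₁', b₂') →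
      Disjoint (Pat b₁ b₂) (Pat b₁' b₂') := by
    intro b₁ b₂ b₁' b₂' hne
    rw [Finset.disjoint_left]
    intro A hA hA'
    have h1 := (Finset.mem_filter.mp hA).2 u hu
    have h2 := (Finset.mem_filter.mp hA').2 u hu
    have h3 := (Finset.mem_filter.mp hA).2 v hv
    have h4 := (Finset.mem_filter.mp hA').2 v hv
    rw [hσu] at h1 h2
    rw [hσv] at h3 h4
    apply hne
    rw [Prod.mk.injEq]
    exact ⟨by rw [← h1, ← h2], by rw [← h3, ← h4]⟩
  have hsub : Pat true true ∪ Pat true false ∪ Pat false true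
      ⊆ Finset.univ.filter (fun A : V → Bool => P A) := by
    intro A hA
    refine Finset.mem_filter.mpr ⟨Finset.mem_univ _, ?_⟩
    rcases Finset.mem_union.mp hA with hA | hA
    · rcases Finset.mem_union.mp hA with hA | hA
      · exact h true true (Or.inl rfl) A (Finset.mem_filter.mp hA).2
      · exact h true false (Or.inl rfl) A (Finset.mem_filter.mp hA).2
    · exact h false true (Or.inr rfl) A (Finset.mem_filter.mp hA).2
  have hle := Finset.card_le_card hsub
  rw [Finset.card_union_of_disjoint
      (Finset.disjoint_union_left.mpr
        ⟨hdisj _ _ _ _ (by simp), hdisj _ _ _ _ (by simp)⟩),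
    Finset.card_union_of_disjoint (hdisj _ _ _ _ (by simp)),
    hcard, hcard, hcard] at hle
  omega

lemma rpow_count_bound {n : ℕ} (K : Finset V) (hKn : K.card ≤ n) {x : ℝ}
    (hx : (K.card : ℝ) ≤ x) :
    (2:ℝ) ^ (-x) * 2 ^ n ≤ (2:ℝ) ^ (n - K.card) := by
  have hsplit : (2:ℝ) ^ (n - K.card) * 2 ^ K.card = 2 ^ n := by
    rw [← pow_add]
    congr 1
    omega
  have hmono : (2:ℝ) ^ (-x) ≤ (2:ℝ) ^ (-(K.card:ℝ)) :=
    Real.rpow_le_rpow_of_exponent_le one_le_two (by linarith)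
  have hcast : (2:ℝ) ^ (-(K.card:ℝ)) = ((2:ℝ) ^ (K.card : ℕ))⁻¹ := by
    rw [Real.rpow_neg (by norm_num), Real.rpow_natCast]
  calc (2:ℝ) ^ (-x) * 2 ^ n ≤ ((2:ℝ) ^ (K.card : ℕ))⁻¹ * 2 ^ n := by
        apply mul_le_mul_of_nonneg_right _ (by positivity)
        rw [← hcast]
        exact hmono
    _ = (2:ℝ) ^ (n - K.card) := by
        rw [← hsplit]
        field_simp

end Patterns

namespace BTB

variable {V : Type} [DecidableEq V] [Fintype V] (H : BTB V)
variable {i j : Fin H.m} {ℓ : V}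

lemma side_card_le {T : RootedTree V} {l : V} (hℓ : l ∈ T.verts) (hne : l ≠ T.root) :
    (T.pathVerts l \ {T.root, l}).card + 2 ≤ T.height := by
  have hpair : ({T.root, l} : Finset V) ⊆ T.pathVerts l := by
    intro x hx
    rcases Finset.mem_insert.mp hx with rfl | hx
    · exact T.root_mem_pathVerts hℓ
    · rw [Finset.mem_singleton] at hx
      subst hx
      exact T.self_mem_pathVerts _
  have h2 : ({T.root, l} : Finset V).card = 2 := by
    rw [Finset.card_insert_of_notMem
      (by simp only [Finset.mem_singleton]; exact fun h => hne h.symm),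
      Finset.card_singleton]
  have hcs := Finset.card_sdiff_of_subset hpair
  have hb := T.card_pathVerts_le l
  have hh := T.depth_le_of_mem hℓ
  have h2le : 2 ≤ (T.pathVerts l).card := by
    rw [← h2]
    exact Finset.card_le_card hpair
  omega

lemma side_empty {T : RootedTree V} {l : V} (h : l = T.root) :
    T.pathVerts l \ {T.root, l} = ∅ := by
  subst h
  rw [T.pathVerts_of_depth_zero T.depth_root]
  ext x
  simp

lemma interior_subset_sides :
    H.interior i j ℓ ⊆ ((H.tree i).pathVerts ℓ \ {(H.tree i).root, ℓ})
      ∪ ((H.tree j).pathVerts ℓ \ {(H.tree j).root, ℓ}) := by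
  intro x hx
  obtain ⟨hri, hrj, hℓx⟩ := H.interior_not_mem hx
  rcases Finset.mem_union.mp (Finset.mem_sdiff.mp hx).1 with hp | hp
  · exact Finset.mem_union.mpr (Or.inl (Finset.mem_sdiff.mpr ⟨hp, by simp [hri, hℓx]⟩))
  · exact Finset.mem_union.mpr (Or.inr (Finset.mem_sdiff.mpr ⟨hp, by simp [hrj, hℓx]⟩))

lemma root_ne_root (hij : i ≠ j) : (H.tree i).root ≠ (H.tree j).root :=
  fun h => hij (H.roots_inj h)

lemma Dset_card_le :
    (H.Dset i j ℓ).card ≤ (H.interior i j ℓ).card + (H.sibs i j ℓ).card + 3 := by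
  have h3 : ({ℓ, (H.tree i).root, (H.tree j).root} : Finset V).card ≤ 3 := by
    apply le_trans (Finset.card_insert_le _ _)
    apply Nat.succ_le_succ
    apply le_trans (Finset.card_insert_le _ _)
    simp
  calc (H.Dset i j ℓ).card
      ≤ (H.interior i j ℓ ∪ H.sibs i j ℓ).card
        + ({ℓ, (H.tree i).root, (H.tree j).root} : Finset V).card :=
        Finset.card_union_le _ _
    _ ≤ (H.interior i j ℓ).card + (H.sibs i j ℓ).card + 3 := by
        have := Finset.card_union_le (H.interior i j ℓ) (H.sibs i j ℓ)
        omega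

/-- The central counting estimate for the event `R_{i,j}`. -/
lemma Rpred_count (hcl : H.IsCommonLeaf i j ℓ) {Lp : ℝ} (hLp : 0 ≤ Lp)
    (hhi : ((H.tree i).height : ℝ) ≤ Lp + 3) (hhj : ((H.tree j).height : ℝ) ≤ Lp + 3) :
    3 * (2:ℝ) ^ (-(4*Lp+7)) * 2 ^ (Fintype.card V)
      ≤ ((Finset.univ.filter (fun A : V → Bool => H.Rpred i j ℓ A)).card : ℝ) := by
  classical
  set n := Fintype.card V with hn
  have hSbI := H.sibs_card_le hcl
  have hss := H.interior_subset_sides (i := i) (j := j) (ℓ := ℓ)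
  by_cases hℓi : ℓ = (H.tree i).root
  · -- degenerate case: the tree `T_i` is a single vertex
    set K : Finset V := H.interior i j ℓ ∪ H.sibs i j ℓ with hK
    have hP : ∀ A : V → Bool,
        (∀ x ∈ K, A x = (fun x => if x ∈ H.sibs i j ℓ then true else false) x)
          → H.Rpred i j ℓ A := by
      intro A hA
      constructor
      · intro v hv
        have hvK : v ∈ K := Finset.mem_union.mpr (Or.inl hv)
        refine ⟨?_, ?_⟩
        · rw [hA v hvK]
          simp [H.interior_not_mem_sibs hcl hv]
        · intro w hw
          have hwS := H.mem_sibs_of_sibling hcl hv hw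
          rw [hA w (Finset.mem_union.mpr (Or.inr hwS))]
          simp [hwS]
      · intro h1 _
        exact absurd hℓi h1
    have hcount := pattern_subset_count K _ _ hP
    -- card bound
    have hiempty : (H.tree i).pathVerts ℓ \ {(H.tree i).root, ℓ} = ∅ :=
      side_empty hℓi
    have hIJ : (H.interior i j ℓ).card
        ≤ ((H.tree j).pathVerts ℓ \ {(H.tree j).root, ℓ}).card := by
      apply Finset.card_le_card
      intro x hx
      rcases Finset.mem_union.mp (hss hx) with h | h
      · rw [hiempty] at h
        exact absurd h (Finset.notMem_empty _)
      · exact h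
    have hℓj : ℓ ≠ (H.tree j).root := by
      rw [hℓi]
      exact H.root_ne_root hcl.1
    have hsj := side_card_le (RootedTree.mem_verts_of_leaf _ hcl.2.2) hℓj
    have hKcard : (K.card : ℝ) ≤ 4*Lp + 5 := by
      have h1 : K.card ≤ (H.interior i j ℓ).card + (H.sibs i j ℓ).card :=
        Finset.card_union_le _ _
      have h2 : K.card + 4 ≤ 2 * (H.tree j).height := by omega
      have : (K.card : ℝ) + 4 ≤ 2 * ((H.tree j).height : ℝ) := by
        exact_mod_cast h2
      linarith
    have hKn : K.card ≤ n := by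
      rw [hn, ← Finset.card_univ]
      exact Finset.card_le_univ K
    have hreal : ((2:ℝ) ^ (n - K.card) : ℝ)
        ≤ ((Finset.univ.filter (fun A : V → Bool => H.Rpred i j ℓ A)).card : ℝ) := by
      exact_mod_cast Nat.cast_le.mpr hcount
    refine le_trans ?_ hreal
    have h45 : (3:ℝ) * (2:ℝ) ^ (-(4*Lp+7)) ≤ (2:ℝ) ^ (-(4*Lp+5)) := by
      have h4 : (4:ℝ) * (2:ℝ) ^ (-(4*Lp+7)) = (2:ℝ) ^ (-(4*Lp+5)) := by
        have : (4:ℝ) = (2:ℝ) ^ (2:ℝ) := by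
          rw [show (2:ℝ) = ((2:ℕ):ℝ) by norm_num, Real.rpow_natCast]
          norm_num
        rw [this, ← Real.rpow_add two_pos]
        ring_nf
      have hpos : (0:ℝ) < (2:ℝ) ^ (-(4*Lp+7)) := Real.rpow_pos_of_pos two_pos _
      nlinarith
    calc 3 * (2:ℝ) ^ (-(4*Lp+7)) * 2 ^ n ≤ (2:ℝ) ^ (-(4*Lp+5)) * 2 ^ n := by
          apply mul_le_mul_of_nonneg_right h45 (by positivity)
      _ ≤ (2:ℝ) ^ (n - K.card) := rpow_count_bound K hKn hKcard
  · by_cases hℓj : ℓ = (H.tree j).root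
    · -- degenerate case: the tree `T_j` is a single vertex
      set K : Finset V := H.interior i j ℓ ∪ H.sibs i j ℓ with hK
      have hP : ∀ A : V → Bool,
          (∀ x ∈ K, A x = (fun x => if x ∈ H.sibs i j ℓ then true else false) x)
            → H.Rpred i j ℓ A := by
        intro A hA
        constructor
        · intro v hv
          have hvK : v ∈ K := Finset.mem_union.mpr (Or.inl hv)
          refine ⟨?_, ?_⟩
          · rw [hA v hvK]
            simp [H.interior_not_mem_sibs hcl hv]
          · intro w hw
            have hwS := H.mem_sibs_of_sibling hcl hv hw
            rw [hA w (Finset.mem_union.mpr (Or.inr hwS))]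
            simp [hwS]
        · intro _ h2
          exact absurd hℓj h2
      have hcount := pattern_subset_count K _ _ hP
      have hjempty : (H.tree j).pathVerts ℓ \ {(H.tree j).root, ℓ} = ∅ :=
        side_empty hℓj
      have hIJ : (H.interior i j ℓ).card
          ≤ ((H.tree i).pathVerts ℓ \ {(H.tree i).root, ℓ}).card := by
        apply Finset.card_le_card
        intro x hx
        rcases Finset.mem_union.mp (hss hx) with h | h
        · exact h
        · rw [hjempty] at h
          exact absurd h (Finset.notMem_empty _)
      have hsi := side_card_le (RootedTree.mem_verts_of_leaf _ hcl.2.1) hℓi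
      have hKcard : (K.card : ℝ) ≤ 4*Lp + 5 := by
        have h1 : K.card ≤ (H.interior i j ℓ).card + (H.sibs i j ℓ).card :=
          Finset.card_union_le _ _
        have h2 : K.card + 4 ≤ 2 * (H.tree i).height := by omega
        have : (K.card : ℝ) + 4 ≤ 2 * ((H.tree i).height : ℝ) := by
          exact_mod_cast h2
        linarith
      have hKn : K.card ≤ n := by
        rw [hn, ← Finset.card_univ]
        exact Finset.card_le_univ K
      have hreal : ((2:ℝ) ^ (n - K.card) : ℝ)
          ≤ ((Finset.univ.filter (fun A : V → Bool => H.Rpred i j ℓ A)).card : ℝ) := by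
        exact_mod_cast Nat.cast_le.mpr hcount
      refine le_trans ?_ hreal
      have h45 : (3:ℝ) * (2:ℝ) ^ (-(4*Lp+7)) ≤ (2:ℝ) ^ (-(4*Lp+5)) := by
        have h4 : (4:ℝ) * (2:ℝ) ^ (-(4*Lp+7)) = (2:ℝ) ^ (-(4*Lp+5)) := by
          have : (4:ℝ) = (2:ℝ) ^ (2:ℝ) := by
            rw [show (2:ℝ) = ((2:ℕ):ℝ) by norm_num, Real.rpow_natCast]
            norm_num
          rw [this, ← Real.rpow_add two_pos]
          ring_nf
        have hpos : (0:ℝ) < (2:ℝ) ^ (-(4*Lp+7)) := Real.rpow_pos_of_pos two_pos _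
        nlinarith
      calc 3 * (2:ℝ) ^ (-(4*Lp+7)) * 2 ^ n ≤ (2:ℝ) ^ (-(4*Lp+5)) * 2 ^ n := by
            apply mul_le_mul_of_nonneg_right h45 (by positivity)
        _ ≤ (2:ℝ) ^ (n - K.card) := rpow_count_bound K hKn hKcard
    · -- main case: `ℓ` is not a root
      set K : Finset V := H.Dset i j ℓ with hK
      obtain ⟨mℓ, mri, mrj⟩ := H.triple_subset_Dset (i := i) (j := j) (ℓ := ℓ)
      set σ : Bool → Bool → V → Bool :=
        fun b₁ b₂ x => if x ∈ H.sibs i j ℓ then true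
          else if x = (H.tree i).root then b₁
          else if x = (H.tree j).root then b₂ else false with hσ
      have hrirj : (H.tree i).root ≠ (H.tree j).root := H.root_ne_root hcl.1
      have hσu : ∀ b₁ b₂, σ b₁ b₂ ((H.tree i).root) = b₁ := by
        intro b₁ b₂
        rw [hσ]
        simp [H.root_i_not_mem_sibs hcl]
      have hσv : ∀ b₁ b₂, σ b₁ b₂ ((H.tree j).root) = b₂ := by
        intro b₁ b₂
        rw [hσ]
        simp [H.root_j_not_mem_sibs hcl, hrirj.symm]
      have hP : ∀ b₁ b₂, (b₁ = true ∨ b₂ = true) → ∀ A : V → Bool,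
          (∀ x ∈ K, A x = σ b₁ b₂ x) → H.Rpred i j ℓ A := by
        intro b₁ b₂ hb A hA
        constructor
        · intro v hv
          have hvK : v ∈ K := H.interior_subset_Dset hv
          obtain ⟨hv1, hv2, hv3⟩ := H.interior_not_mem hv
          refine ⟨?_, ?_⟩
          · rw [hA v hvK, hσ]
            simp [H.interior_not_mem_sibs hcl hv, hv1, hv2]
          · intro w hw
            have hwS := H.mem_sibs_of_sibling hcl hv hw
            rw [hA w (H.sibs_subset_Dset hwS), hσ]
            simp [hwS]
        · intro h1 h2
          refine ⟨?_, ?_⟩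
          · rw [hA ℓ mℓ, hσ]
            simp [H.leaf_not_mem_sibs hcl, h1, h2]
          · rw [hA _ mri, hA _ mrj, hσu, hσv]
            rcases hb with rfl | rfl
            · exact Or.inl rfl
            · exact Or.inr rfl
      have hcount := three_patterns K σ _ _ _ mri mrj hσu hσv hP
      have hsi := side_card_le (RootedTree.mem_verts_of_leaf _ hcl.2.1) hℓi
      have hsj := side_card_le (RootedTree.mem_verts_of_leaf _ hcl.2.2) hℓj
      have hIcard := Finset.card_le_card hss
      have hIu := Finset.card_union_le
        ((H.tree i).pathVerts ℓ \ {(H.tree i).root, ℓ})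
        ((H.tree j).pathVerts ℓ \ {(H.tree j).root, ℓ})
      have hDle := H.Dset_card_le (i := i) (j := j) (ℓ := ℓ)
      rw [← hK] at hDle
      have hKcard : (K.card : ℝ) ≤ 4*Lp + 7 := by
        have h2 : K.card + 5 ≤ 2 * (H.tree i).height + 2 * (H.tree j).height := by
          omega
        have : (K.card : ℝ) + 5
            ≤ 2 * ((H.tree i).height : ℝ) + 2 * ((H.tree j).height : ℝ) := by
          exact_mod_cast h2
        linarith
      have hKn : K.card ≤ n := by
        rw [hn, ← Finset.card_univ]
        exact Finset.card_le_univ K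
      have hreal : 3 * ((2:ℝ) ^ (n - K.card) : ℝ)
          ≤ ((Finset.univ.filter (fun A : V → Bool => H.Rpred i j ℓ A)).card : ℝ) := by
        exact_mod_cast hcount
      refine le_trans ?_ hreal
      calc 3 * (2:ℝ) ^ (-(4*Lp+7)) * 2 ^ n
          = 3 * ((2:ℝ) ^ (-(4*Lp+7)) * 2 ^ n) := by ring
        _ ≤ 3 * (2:ℝ) ^ (n - K.card) := by
            apply mul_le_mul_of_nonneg_left (rpow_count_bound K hKn hKcard) (by norm_num)

end BTB

section SATside

variable {V : Type} [DecidableEq V] [Fintype V]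

/-- Boolean value of a variable in a total assignment. -/
def Sval (S : Finset (V × Bool)) (v : V) : Bool := decide ((v, true) ∈ S)

lemma mem_iff_sval {S : Finset (V × Bool)} (hS : AssignsExactly Finset.univ S)
    (v : V) (b : Bool) : (v, b) ∈ S ↔ b = Sval S v := by
  obtain ⟨-, h⟩ := hS
  obtain ⟨b₀, hb₀, huniq⟩ := h v (Finset.mem_univ v)
  have hSb : Sval S v = b₀ := by
    cases b₀ with
    | true => simp [Sval, hb₀]
    | false =>
      have hnt : (v, true) ∉ S := by
        intro h'
        have := huniq true h'
        simp at this
      simp [Sval, hnt]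
  constructor
  · intro hmem
    rw [huniq b hmem, hSb]
  · intro hb
    rw [hb, hSb]
    exact hb₀

end SATside

namespace BTB

variable {V : Type} [DecidableEq V] [Fintype V] (H : BTB V)

noncomputable def leafOf (H : BTB V) (i j : Fin H.m) : V :=
  if h : H.Adjacent i j then h.choose else (H.tree i).root

lemma leafOf_spec {i j : Fin H.m} (h : H.Adjacent i j) :
    H.IsCommonLeaf i j (H.leafOf i j) := by
  rw [leafOf, dif_pos h]
  exact h.choose_spec

lemma mem_fix_sval {S : Finset (V × Bool)} {v : V} (h : v ∈ H.Fix S) :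
    Sval S v = true := by
  obtain ⟨a, b, -, htrue, -⟩ := h
  simp [Sval, htrue]

/-- Any vertex of a clause other than its leaf lies in a unique tree. -/
lemma clause_other_onlyIn {a b : Fin H.m} {v : V} (hcl : H.IsCommonLeaf a b v) {w : V}
    (hw : w ∈ H.clauseVerts a b v) (hwv : w ≠ v) : H.OnlyIn a w ∨ H.OnlyIn b w := by
  rcases Finset.mem_union.mp hw with hp | hp
  · left
    have hva := RootedTree.mem_verts_of_leaf _ hcl.2.1
    exact H.onlyIn_of_not_leaf ((H.tree a).pathVerts_subset hva hp)
      ((H.tree a).not_leaf_of_mem_pathVerts hva hp hwv)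
  · right
    have hvb := RootedTree.mem_verts_of_leaf _ hcl.2.2
    exact H.onlyIn_of_not_leaf ((H.tree b).pathVerts_subset hvb hp)
      ((H.tree b).not_leaf_of_mem_pathVerts hvb hp hwv)

/-- The set of assignments "lifting" a satisfying assignment `S`. -/
noncomputable def Lift (H : BTB V) (S : Finset (V × Bool)) : Finset (V → Bool) :=
  Finset.univ.filter (fun A => ∀ v : V, v ∉ H.Fix S → A v = Sval S v)

lemma card_Lift (S : Finset (V × Bool)) :
    (H.Lift S).card = 2 ^ ((Finset.univ.filter (fun v => v ∈ H.Fix S)).card) := by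
  classical
  have heq : H.Lift S = Finset.univ.filter
      (fun A : V → Bool =>
        ∀ x ∈ Finset.univ.filter (fun v : V => v ∉ H.Fix S), A x = Sval S x) := by
    apply Finset.filter_congr
    intro A _
    constructor
    · intro h x hx
      exact h x (Finset.mem_filter.mp hx).2
    · intro h x hx
      exact h x (Finset.mem_filter.mpr ⟨Finset.mem_univ _, hx⟩)
  rw [heq, card_pattern]
  congr 1
  have hsplit := Finset.card_filter_add_card_filter_not
    (s := Finset.univ) (p := fun v : V => v ∈ H.Fix S)
  rw [Finset.card_univ] at hsplit
  omega

lemma ncard_fix_eq (S : Finset (V × Bool)) :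
    (H.Fix S).ncard = (Finset.univ.filter (fun v => v ∈ H.Fix S)).card := by
  classical
  have : H.Fix S = ↑(Finset.univ.filter (fun v => v ∈ H.Fix S)) := by
    ext v
    simp
  conv_lhs => rw [this]
  rw [Set.ncard_coe_finset]

lemma weight_eq_lift (S : Finset (V × Bool)) :
    H.weight S = ((H.Lift S).card : ℝ) / 2 ^ (Fintype.card V) := by
  classical
  rw [weight, card_Lift, ncard_fix_eq]
  set f := (Finset.univ.filter (fun v => v ∈ H.Fix S)).card with hf
  have hfle : f ≤ Fintype.card V := by
    rw [hf, ← Finset.card_univ]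
    exact Finset.card_filter_le _ _
  have hsplit : (2:ℝ) ^ (Fintype.card V) = 2 ^ (Fintype.card V - f) * 2 ^ f := by
    rw [← pow_add]
    congr 1
    omega
  rw [eq_div_iff (by positivity), hsplit, one_div, inv_pow, ← mul_assoc,
    inv_mul_cancel₀ (by positivity), one_mul]
  push_cast
  rfl

lemma mem_SATH_iff (S : Finset (V × Bool)) :
    S ∈ H.SATH ↔ AssignsExactly Finset.univ S ∧ H.SatisfiesPhi S := by
  rw [SATH, Finset.mem_filter]
  simp

lemma lift_eq_of_mem {S S' : Finset (V × Bool)}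
    (hS : S ∈ H.SATH) (hS' : S' ∈ H.SATH) {A : V → Bool}
    (hA : A ∈ H.Lift S) (hA' : A ∈ H.Lift S') : S = S' := by
  obtain ⟨hSassign, hSphi⟩ := (H.mem_SATH_iff S).mp hS
  obtain ⟨hS'assign, hS'phi⟩ := (H.mem_SATH_iff S').mp hS'
  have hAS := (Finset.mem_filter.mp hA).2
  have hAS' := (Finset.mem_filter.mp hA').2
  have key : ∀ S₁ S₂ : Finset (V × Bool), AssignsExactly Finset.univ S₁ →
      AssignsExactly Finset.univ S₂ → H.SatisfiesPhi S₂ →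
      (∀ v, v ∉ H.Fix S₁ → A v = Sval S₁ v) → (∀ v, v ∉ H.Fix S₂ → A v = Sval S₂ v) →
      ∀ v, v ∈ H.Fix S₁ → Sval S₂ v = true := by
    intro S₁ S₂ h₁ h₂ hphi₂ hA₁ hA₂ v hv
    obtain ⟨a, b, hcl, hvtrue, hall⟩ := hv
    have hother : ∀ w ∈ H.clauseVerts a b v, w ≠ v → Sval S₂ w = false := by
      intro w hw hwv
      have hwS₁ : Sval S₁ w = false := ((mem_iff_sval h₁ w false).mp (hall w hw hwv)).symm
      have honly := H.clause_other_onlyIn hcl hw hwv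
      have hnf₁ : w ∉ H.Fix S₁ := by
        rcases honly with ho | ho
        · exact ho.not_mem_fix S₁
        · exact ho.not_mem_fix S₁
      have hnf₂ : w ∉ H.Fix S₂ := by
        rcases honly with ho | ho
        · exact ho.not_mem_fix S₂
        · exact ho.not_mem_fix S₂
      rw [← hA₂ w hnf₂, hA₁ w hnf₁]
      exact hwS₁
    obtain ⟨u, hu, hutrue⟩ := hphi₂ a b v hcl
    have husval : Sval S₂ u = true := ((mem_iff_sval h₂ u true).mp hutrue).symm
    by_cases huv : u = v
    · rw [← huv]
      exact husval
    · rw [hother u hu huv] at husval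
      exact absurd husval (by simp)
  apply Finset.ext
  rintro ⟨v, b⟩
  rw [mem_iff_sval hSassign, mem_iff_sval hS'assign]
  suffices h : Sval S v = Sval S' v by rw [h]
  by_cases h1 : v ∈ H.Fix S
  · rw [H.mem_fix_sval h1, key S S' hSassign hS'assign hS'phi hAS hAS' v h1]
  · by_cases h2 : v ∈ H.Fix S'
    · rw [H.mem_fix_sval h2, key S' S hS'assign hSassign hSphi hAS' hAS v h2]
    · rw [← hAS v h1, ← hAS' v h2]

lemma respects_of_Rpred {i j : Fin H.m} {ℓ : V} (hcl : H.IsCommonLeaf i j ℓ)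
    {S : Finset (V × Bool)} (hassign : AssignsExactly Finset.univ S)
    {A : V → Bool} (hA : ∀ v, v ∉ H.Fix S → A v = Sval S v)
    (hR : H.Rpred i j ℓ A) : H.Respects i j S := by
  have hint : ∀ v ∈ H.clauseVerts i j ℓ, v ≠ (H.tree i).root → v ≠ (H.tree j).root →
      v ≠ ℓ → v ∈ H.interior i j ℓ := by
    intro v hv h1 h2 h3
    rw [interior, Finset.mem_sdiff]
    exact ⟨hv, by simp [h1, h2, h3]⟩
  refine ⟨ℓ, hcl, ?_, ?_⟩
  · intro v hv hvi hvj
    by_cases hvℓ : v = ℓ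
    · subst hvℓ
      obtain ⟨hAℓ, hroots⟩ := hR.2 hvi hvj
      have hℓfix : v ∉ H.Fix S := by
        intro hfix
        obtain ⟨a, b, hcl', htrue, hall⟩ := hfix
        have hpair := H.commonLeaf_pair hcl hcl'
        have hcv : H.clauseVerts a b v = H.clauseVerts i j v := by
          rcases hpair with ⟨rfl, rfl⟩ | ⟨rfl, rfl⟩
          · rfl
          · rw [clauseVerts, clauseVerts, Finset.union_comm]
        rw [hcv] at hall
        have hrooti_mem : (H.tree i).root ∈ H.clauseVerts i j v :=
          Finset.mem_union.mpr (Or.inl ((H.tree i).root_mem_pathVerts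
            (RootedTree.mem_verts_of_leaf _ hcl.2.1)))
        have hrootj_mem : (H.tree j).root ∈ H.clauseVerts i j v :=
          Finset.mem_union.mpr (Or.inr ((H.tree j).root_mem_pathVerts
            (RootedTree.mem_verts_of_leaf _ hcl.2.2)))
        have hfi := hall _ hrooti_mem (Ne.symm hvi)
        have hfj := hall _ hrootj_mem (Ne.symm hvj)
        have hsi : Sval S ((H.tree i).root) = false :=
          ((mem_iff_sval hassign _ false).mp hfi).symm
        have hsj : Sval S ((H.tree j).root) = false :=
          ((mem_iff_sval hassign _ false).mp hfj).symm
        have hnoti : (H.tree i).root ∉ H.Fix S := by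
          intro hf
          rw [H.mem_fix_sval hf] at hsi
          exact absurd hsi (by simp)
        have hnotj : (H.tree j).root ∉ H.Fix S := by
          intro hf
          rw [H.mem_fix_sval hf] at hsj
          exact absurd hsj (by simp)
        rcases hroots with h | h
        · rw [hA _ hnoti, hsi] at h
          exact absurd h (by simp)
        · rw [hA _ hnotj, hsj] at h
          exact absurd h (by simp)
      have hsv : Sval S v = false := by
        rw [← hA v hℓfix]
        exact hAℓ
      exact (mem_iff_sval hassign v false).mpr hsv.symm
    · have hvI := hint v hv hvi hvj hvℓ
      obtain ⟨hfalse, -⟩ := hR.1 v hvI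
      have hnf : v ∉ H.Fix S := by
        rcases H.interior_spec hcl hvI with ⟨-, ho⟩ | ⟨-, ho⟩
        · exact ho.not_mem_fix S
        · exact ho.not_mem_fix S
      have hsv : Sval S v = false := by
        rw [← hA v hnf]
        exact hfalse
      exact (mem_iff_sval hassign v false).mpr hsv.symm
  · intro v hv hvi hvj hvℓ w hw
    have hvI := hint v hv hvi hvj hvℓ
    have hsib := (hR.1 v hvI).2 w hw
    have hwS := H.mem_sibs_of_sibling hcl hvI hw
    obtain ⟨k, -, how, -⟩ := H.sibs_spec hcl hwS
    have hnf := how.not_mem_fix S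
    have hsv : Sval S w = true := by
      rw [← hA w hnf]
      exact hsib
    exact (mem_iff_sval hassign w true).mpr hsv.symm

end BTB

end Aux

set_option maxHeartbeats 2000000 in
theorem statement_17' (V : Type) [DecidableEq V] [Fintype V] (H : BTB V)
    (hH : H.IsPseudoexpander) (M : Finset (Fin H.m × Fin H.m))
    (hM : H.IsPseudomatching M) :
    H.Pr (fun S => ((M.filter (fun e => H.Respects e.1 e.2 S)).card : ℝ) <
        (3 / 12800 : ℝ) * (H.m : ℝ) ^ (-(4 / 4.9) : ℝ) * M.card) ≤
      (0.4 : ℝ) ^ (100 * ((3 / 12800 : ℝ) * (H.m : ℝ) ^ (-(4 / 4.9) : ℝ)) * M.card) := by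
  classical
  set η : ℝ := (3 / 12800 : ℝ) * (H.m : ℝ) ^ (-(4 / 4.9) : ℝ) with hηdef
  set E : Finset (V × Bool) → Prop :=
    fun S => ((M.filter (fun e => H.Respects e.1 e.2 S)).card : ℝ) < η * M.card with hEdef
  have hη0 : 0 ≤ η := by
    rw [hηdef]
    positivity
  have hRHS0 : (0:ℝ) ≤ (0.4 : ℝ) ^ (100 * η * M.card) :=
    Real.rpow_nonneg (by norm_num) _
  by_cases hM0 : M = ∅
  · subst hM0
    have hempty : (H.SATH.filter E) = ∅ := by
      apply Finset.filter_eq_empty_iff.mpr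
      intro S _
      rw [hEdef]
      simp
    rw [BTB.Pr, hempty, Finset.sum_empty]
    exact hRHS0
  · -- M nonempty, hence H.m ≥ 1
    obtain ⟨e₀, he₀⟩ := Finset.nonempty_iff_ne_empty.mpr hM0
    have hm1 : 1 ≤ H.m := Fin.pos e₀.1
    have hmR : (1:ℝ) ≤ (H.m : ℝ) := by exact_mod_cast hm1
    have hmpos : (0:ℝ) < (H.m : ℝ) := by linarith
    set n := Fintype.card V with hn
    set Lp : ℝ := Real.logb 2 (H.m : ℝ) / 4.9 with hLpdef
    have hLp0 : 0 ≤ Lp := by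
      rw [hLpdef]
      have := Real.logb_nonneg one_lt_two hmR
      positivity
    set p0 : ℝ := 3 * (2:ℝ) ^ (-(4*Lp+7)) with hp0def
    -- the key identity p0 = 100 η
    have hmpow : (2:ℝ) ^ (-(4:ℝ)*Lp) = (H.m:ℝ) ^ (-(4/4.9):ℝ) := by
      conv_rhs => rw [← Real.rpow_logb two_pos (by norm_num) hmpos]
      rw [← Real.rpow_mul (le_of_lt two_pos)]
      congr 1
      rw [hLpdef]
      ring
    have h27 : (2:ℝ) ^ (-(7:ℝ)) = 1/128 := by
      rw [Real.rpow_neg (le_of_lt two_pos)]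
      rw [show ((7:ℝ) = ((7:ℕ):ℝ)) by norm_num, Real.rpow_natCast]
      norm_num
    have hp0η : p0 = 100 * η := by
      rw [hp0def, hηdef, show (-(4*Lp+7)) = (-(4:ℝ)*Lp) + (-(7:ℝ)) by ring,
        Real.rpow_add two_pos, hmpow, h27]
      ring
    have hp0pos : 0 < p0 := by
      rw [hp0def]
      positivity
    set lam : ℝ := 1/100 with hlamdef
    set β : ℝ := 1 - (1 - lam) * p0 with hβdef
    have hβ0 : 0 ≤ β := by
      have hm1' : (H.m:ℝ) ^ (-(4/4.9):ℝ) ≤ 1 :=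
        Real.rpow_le_one_of_one_le_of_nonpos hmR (by norm_num)
      have hη1 : η ≤ 3/12800 := by
        rw [hηdef]
        nlinarith
      rw [hβdef, hlamdef, hp0η]
      nlinarith
    set t : ℝ := η * M.card with htdef
    have ht0 : 0 ≤ t := by
      rw [htdef]
      positivity
    set BadA : Finset (V → Bool) := Finset.univ.filter (fun A : V → Bool =>
      ((M.filter (fun e => H.Rpred e.1 e.2 (H.leafOf e.1 e.2) A)).card : ℝ) < t)
      with hBadAdef
    -- common leaves of matched pseudoedges
    have hadj : ∀ e ∈ M, H.Adjacent e.1 e.2 := fun e he => (hM.1 e he).2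
    have hcl : ∀ e ∈ M, H.IsCommonLeaf e.1 e.2 (H.leafOf e.1 e.2) :=
      fun e he => H.leafOf_spec (hadj e he)
    -- the weight functions for the MGF argument
    set w : {e // e ∈ M} → (V → Bool) → ℝ :=
      fun e A => if H.Rpred e.1.1 e.1.2 (H.leafOf e.1.1 e.1.2) A then lam else 1 with hwdef
    set D : {e // e ∈ M} → Finset V :=
      fun e => H.Dset e.1.1 e.1.2 (H.leafOf e.1.1 e.1.2) with hDdef
    have hlam0 : (0:ℝ) < lam := by rw [hlamdef]; norm_num
    have hlam1 : lam ≤ 1 := by rw [hlamdef]; norm_num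
    have hw_nonneg : ∀ (e : {e // e ∈ M}) (A : V → Bool), 0 ≤ w e A := by
      intro e A
      rw [hwdef]
      dsimp only
      split_ifs
      · linarith
      · norm_num
    have hdisjD : ∀ e f : {e // e ∈ M}, e ≠ f → Disjoint (D e) (D f) := by
      intro e f hef
      have hne : e.1 ≠ f.1 := fun h => hef (Subtype.ext h)
      obtain ⟨h1, h2, h3, h4⟩ := hM.2 e.1 e.2 f.1 f.2 hne
      exact H.Dset_disjoint (hcl e.1 e.2) (hcl f.1 f.2) h1 h2 h3 h4
    have hwD : ∀ (e : {e // e ∈ M}) (A B : V → Bool),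
        (∀ x ∈ D e, A x = B x) → w e A = w e B := by
      intro e A B hAB
      rw [hwdef]
      dsimp only
      have hiff : H.Rpred e.1.1 e.1.2 (H.leafOf e.1.1 e.1.2) A
          ↔ H.Rpred e.1.1 e.1.2 (H.leafOf e.1.1 e.1.2) B := by
        constructor
        · exact H.Rpred_congr (hcl e.1 e.2) hAB
        · exact H.Rpred_congr (hcl e.1 e.2) (fun x hx => (hAB x hx).symm)
      by_cases hR : H.Rpred e.1.1 e.1.2 (H.leafOf e.1.1 e.1.2) A
      · rw [if_pos hR, if_pos (hiff.mp hR)]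
      · rw [if_neg hR, if_neg (fun h => hR (hiff.mpr h))]
    -- the per-edge expectation bound
    have hcard_fun : (Finset.univ : Finset (V → Bool)).card = 2 ^ n := by
      rw [Finset.card_univ, Fintype.card_fun, Fintype.card_bool, hn]
    have hsum_edge : ∀ e : {e // e ∈ M},
        ∑ A : V → Bool, w e A ≤ (2:ℝ) ^ n * β := by
      intro e
      set cnt := (Finset.univ.filter
        (fun A : V → Bool => H.Rpred e.1.1 e.1.2 (H.leafOf e.1.1 e.1.2) A)).card with hcnt
      have hcnt_le : cnt ≤ 2 ^ n := by
        rw [hcnt, ← hcard_fun]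
        exact Finset.card_filter_le _ _
      have hsum : ∑ A : V → Bool, w e A
          = lam * cnt + ((2:ℝ) ^ n - cnt) := by
        rw [hwdef]
        dsimp only
        rw [Finset.sum_ite, Finset.sum_const, Finset.sum_const]
        have hnotcnt : (Finset.univ.filter (fun A : V → Bool =>
            ¬ H.Rpred e.1.1 e.1.2 (H.leafOf e.1.1 e.1.2) A)).card = 2 ^ n - cnt := by
          have := Finset.card_filter_add_card_filter_not
            (s := (Finset.univ : Finset (V → Bool)))
            (p := fun A : V → Bool => H.Rpred e.1.1 e.1.2 (H.leafOf e.1.1 e.1.2) A)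
          rw [hcard_fun] at this
          omega
        rw [hnotcnt, nsmul_eq_mul, nsmul_eq_mul, mul_one]
        push_cast [hcnt_le]
        ring
      -- the counting lower bound
      have hhi : ((H.tree e.1.1).height : ℝ) ≤ Lp + 3 := by
        have := hH.1 e.1.1
        rw [← hLpdef] at this
        exact this
      have hhj : ((H.tree e.1.2).height : ℝ) ≤ Lp + 3 := by
        have := hH.1 e.1.2
        rw [← hLpdef] at this
        exact this
      have hcount := H.Rpred_count (hcl e.1 e.2) hLp0 hhi hhj
      rw [← hn] at hcount
      have hcnt_ge : p0 * 2 ^ n ≤ (cnt : ℝ) := by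
        rw [hp0def, hcnt]
        exact hcount
      rw [hsum, hβdef]
      nlinarith [hcnt_ge, hlam0, hlam1,
        mul_le_mul_of_nonneg_left hcnt_ge (by linarith : (0:ℝ) ≤ 1 - lam)]
    have hsum_edge_nonneg : ∀ e : {e // e ∈ M}, 0 ≤ ∑ A : V → Bool, w e A :=
      fun e => Finset.sum_nonneg (fun A _ => hw_nonneg e A)
    -- factorization
    have hfact := prod_factorization D hdisjD w hwD (Finset.univ : Finset {e // e ∈ M})
    rw [← hn] at hfact
    have hMcard : (Finset.univ : Finset {e // e ∈ M}).card = M.card := by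
      rw [Finset.card_univ, Fintype.card_coe]
    have hprod_bound : ∏ e ∈ (Finset.univ : Finset {e // e ∈ M}), ∑ A : V → Bool, w e A
        ≤ ((2:ℝ) ^ n * β) ^ M.card := by
      rw [← hMcard, ← Finset.prod_const]
      exact Finset.prod_le_prod (fun e _ => hsum_edge_nonneg e) (fun e _ => hsum_edge e)
    have hXpos : (0:ℝ) < ((2:ℝ) ^ n) ^ M.card := by positivity
    have hsum_prod_le : ∑ A : V → Bool, ∏ e ∈ (Finset.univ : Finset {e // e ∈ M}), w e A
        ≤ (2:ℝ) ^ n * β ^ M.card := by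
      have h1 : ((2:ℝ) ^ n) ^ M.card * ∑ A : V → Bool,
            ∏ e ∈ (Finset.univ : Finset {e // e ∈ M}), w e A
          ≤ ((2:ℝ) ^ n) ^ M.card * ((2:ℝ) ^ n * β ^ M.card) := by
        rw [hMcard] at hfact
        rw [hfact]
        calc (2:ℝ) ^ n * ∏ e ∈ (Finset.univ : Finset {e // e ∈ M}), ∑ A : V → Bool, w e A
            ≤ (2:ℝ) ^ n * (((2:ℝ) ^ n * β) ^ M.card) := by
              apply mul_le_mul_of_nonneg_left hprod_bound (by positivity)
          _ = ((2:ℝ) ^ n) ^ M.card * ((2:ℝ) ^ n * β ^ M.card) := by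
              rw [mul_pow]
              ring
      exact le_of_mul_le_mul_left h1 hXpos
    -- lower bound for the sum over bad assignments
    have hprod_bad : ∀ A ∈ BadA,
        lam ^ t ≤ ∏ e ∈ (Finset.univ : Finset {e // e ∈ M}), w e A := by
      intro A hA
      have hAcard := (Finset.mem_filter.mp hA).2
      have hprod_eq : ∏ e ∈ (Finset.univ : Finset {e // e ∈ M}), w e A
          = lam ^ ((M.filter (fun e => H.Rpred e.1 e.2 (H.leafOf e.1 e.2) A)).card) := by
        rw [Finset.univ_eq_attach, hwdef]
        rw [Finset.prod_attach M
          (f := fun e => if H.Rpred e.1 e.2 (H.leafOf e.1 e.2) A then lam else 1)]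
        rw [Finset.prod_ite, Finset.prod_const, Finset.prod_const, one_pow, mul_one]
      rw [hprod_eq]
      set s := (M.filter (fun e => H.Rpred e.1 e.2 (H.leafOf e.1 e.2) A)).card
      have hst : (s:ℝ) ≤ t := le_of_lt hAcard
      calc lam ^ t ≤ lam ^ ((s:ℕ):ℝ) :=
            Real.rpow_le_rpow_of_exponent_ge hlam0 hlam1 hst
        _ = lam ^ (s:ℕ) := Real.rpow_natCast lam s
    have hBadA_bound : (BadA.card : ℝ) * lam ^ t
        ≤ (2:ℝ) ^ n * β ^ M.card := by
      refine le_trans ?_ hsum_prod_le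
      calc (BadA.card : ℝ) * lam ^ t
          = ∑ _A ∈ BadA, lam ^ t := by rw [Finset.sum_const, nsmul_eq_mul]
        _ ≤ ∑ A ∈ BadA, ∏ e ∈ (Finset.univ : Finset {e // e ∈ M}), w e A :=
            Finset.sum_le_sum hprod_bad
        _ ≤ ∑ A : V → Bool, ∏ e ∈ (Finset.univ : Finset {e // e ∈ M}), w e A := by
            apply Finset.sum_le_sum_of_subset_of_nonneg (Finset.filter_subset _ _)
            intro A _ _
            exact Finset.prod_nonneg (fun e _ => hw_nonneg e A)
    -- the measure-side computation
    set bad := H.SATH.filter E with hbaddef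
    have hPr : H.Pr E = (∑ S ∈ bad, ((H.Lift S).card : ℝ)) / 2 ^ n := by
      rw [BTB.Pr, Finset.sum_div]
      refine Finset.sum_congr rfl fun S _ => ?_
      rw [H.weight_eq_lift S, hn]
    have hdisjL : ∀ S ∈ bad, ∀ S' ∈ bad, S ≠ S' →
        Disjoint (H.Lift S) (H.Lift S') := by
      intro S hS S' hS' hne
      rw [Finset.disjoint_left]
      intro A hA hA'
      exact hne (H.lift_eq_of_mem (Finset.mem_filter.mp hS).1
        (Finset.mem_filter.mp hS').1 hA hA')
    have hcardU : ∑ S ∈ bad, ((H.Lift S).card) = (bad.biUnion (fun S => H.Lift S)).card :=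
      (Finset.card_biUnion hdisjL).symm
    have hsubBad : bad.biUnion (fun S => H.Lift S) ⊆ BadA := by
      intro A hA
      obtain ⟨S, hSbad, hAS⟩ := Finset.mem_biUnion.mp hA
      have hSS := Finset.mem_filter.mp hSbad
      obtain ⟨hassign, hphi⟩ := (H.mem_SATH_iff S).mp hSS.1
      refine Finset.mem_filter.mpr ⟨Finset.mem_univ _, ?_⟩
      have hmono : M.filter (fun e => H.Rpred e.1 e.2 (H.leafOf e.1 e.2) A)
          ⊆ M.filter (fun e => H.Respects e.1 e.2 S) := by
        intro e he'
        obtain ⟨heM, hRe⟩ := Finset.mem_filter.mp he'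
        exact Finset.mem_filter.mpr ⟨heM,
          H.respects_of_Rpred (hcl e heM) hassign ((Finset.mem_filter.mp hAS).2) hRe⟩
      have h1 : ((M.filter (fun e => H.Rpred e.1 e.2 (H.leafOf e.1 e.2) A)).card : ℝ)
          ≤ ((M.filter (fun e => H.Respects e.1 e.2 S)).card : ℝ) := by
        exact_mod_cast Finset.card_le_card hmono
      exact lt_of_le_of_lt h1 hSS.2
    have hPr_le : H.Pr E ≤ (BadA.card : ℝ) / 2 ^ n := by
      rw [hPr]
      have hnum : (∑ S ∈ bad, ((H.Lift S).card : ℝ)) ≤ (BadA.card : ℝ) := by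
        have h1 : ∑ S ∈ bad, ((H.Lift S).card) ≤ BadA.card := by
          rw [hcardU]
          exact Finset.card_le_card hsubBad
        exact_mod_cast h1
      rw [div_eq_mul_inv, div_eq_mul_inv]
      exact mul_le_mul_of_nonneg_right hnum (by positivity)
    have hBad_le : (BadA.card : ℝ) ≤ (2:ℝ) ^ n * β ^ M.card / lam ^ t := by
      rw [le_div_iff₀ (Real.rpow_pos_of_pos hlam0 t)]
      exact hBadA_bound
    have hPr_le2 : H.Pr E ≤ β ^ M.card / lam ^ t := by
      refine le_trans hPr_le ?_
      have h2 : (BadA.card : ℝ) / 2 ^ n ≤ ((2:ℝ) ^ n * β ^ M.card / lam ^ t) / 2 ^ n := by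
        rw [div_eq_mul_inv, div_eq_mul_inv]
        exact mul_le_mul_of_nonneg_right hBad_le (by positivity)
      refine le_trans h2 (le_of_eq ?_)
      field_simp
    have hβexp : β ^ M.card ≤ Real.exp (-(99:ℝ) * t) := by
      have hβval : β = 1 - 99 * η := by
        rw [hβdef, hp0η, hlamdef]
        ring
      have h1 : β ≤ Real.exp (-(99 * η)) := by
        have := Real.add_one_le_exp (-(99 * η))
        linarith [hβval]
      calc β ^ M.card ≤ (Real.exp (-(99*η))) ^ M.card := pow_le_pow_left₀ hβ0 h1 _
        _ = Real.exp ((M.card : ℝ) * (-(99*η))) := by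
            rw [← Real.exp_nat_mul]
        _ = Real.exp (-(99:ℝ) * t) := by
            rw [htdef]
            ring_nf
    have hlam_t : lam ^ t = ((100:ℝ) ^ t)⁻¹ := by
      rw [hlamdef, one_div, ← Real.inv_rpow (by norm_num : (0:ℝ) ≤ 100)]
    have hfinal1 : β ^ M.card / lam ^ t ≤ Real.exp (-(99:ℝ)*t) * (100:ℝ) ^ t := by
      rw [hlam_t, div_eq_mul_inv, inv_inv]
      exact mul_le_mul_of_nonneg_right hβexp (Real.rpow_nonneg (by norm_num) t)
    have hexp_t : Real.exp (-(99:ℝ)*t) = (Real.exp (-(99:ℝ))) ^ t := Real.exp_mul _ t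
    have hfinal2 : Real.exp (-(99:ℝ)*t) * (100:ℝ) ^ t = (Real.exp (-(99:ℝ)) * 100) ^ t := by
      rw [hexp_t, ← Real.mul_rpow (le_of_lt (Real.exp_pos _)) (by norm_num)]
    have hbase : Real.exp (-(99:ℝ)) * 100 ≤ (0.4:ℝ) ^ (((100:ℕ)):ℝ) := by
      rw [Real.rpow_natCast, Real.exp_neg, mul_comm, ← div_eq_mul_inv,
        div_le_iff₀ (Real.exp_pos 99)]
      have he1 : (2.718:ℝ) ≤ Real.exp 1 := by
        have := Real.exp_one_gt_d9
        linarith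
      have he99 : (2.718:ℝ)^(99:ℕ) ≤ Real.exp 99 := by
        calc (2.718:ℝ)^(99:ℕ) ≤ (Real.exp 1)^(99:ℕ) := pow_le_pow_left₀ (by norm_num) he1 99
          _ = Real.exp 99 := by
              rw [← Real.exp_nat_mul]
              norm_num
      calc (100:ℝ) ≤ (0.4:ℝ)^(100:ℕ) * (2.718:ℝ)^(99:ℕ) := by norm_num
        _ ≤ (0.4:ℝ)^(100:ℕ) * Real.exp 99 := by
            exact mul_le_mul_of_nonneg_left he99 (by positivity)
    have hfinal3 : (Real.exp (-(99:ℝ)) * 100) ^ t ≤ ((0.4:ℝ) ^ (((100:ℕ)):ℝ)) ^ t :=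
      Real.rpow_le_rpow (by positivity) hbase ht0
    have hRHS : ((0.4:ℝ) ^ (((100:ℕ)):ℝ)) ^ t = (0.4:ℝ) ^ (100 * η * (M.card:ℝ)) := by
      rw [← Real.rpow_mul (by norm_num : (0:ℝ) ≤ 0.4), htdef]
      congr 1
      push_cast
      ring
    calc H.Pr E ≤ β ^ M.card / lam ^ t := hPr_le2
      _ ≤ Real.exp (-(99:ℝ)*t) * (100:ℝ) ^ t := hfinal1
      _ = (Real.exp (-(99:ℝ)) * 100) ^ t := hfinal2
      _ ≤ ((0.4:ℝ) ^ (((100:ℕ)):ℝ)) ^ t := hfinal3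
      _ = (0.4:ℝ) ^ (100 * η * (M.card:ℝ)) := hRHS


/-- Chernoff-type bound: for `η = (3/12800)·m^(−4/4.9)`, the probability
that fewer than `η·|M|` pseudoedges of `M` are respected is at most `0.4^(100·η·|M|)`. -/
theorem statement_17 (V : Type) [DecidableEq V] [Fintype V] (H : BTB V)
    (hH : H.IsPseudoexpander) (M : Finset (Fin H.m × Fin H.m))
    (hM : H.IsPseudomatching M) :
    H.Pr (fun S => ((M.filter (fun e => H.Respects e.1 e.2 S)).card : ℝ) <
        (3 / 12800 : ℝ) * (H.m : ℝ) ^ (-(4 / 4.9) : ℝ) * M.card) ≤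
      (0.4 : ℝ) ^ (100 * ((3 / 12800 : ℝ) * (H.m : ℝ) ^ (-(4 / 4.9) : ℝ)) * M.card) :=
  statement_17' V H hH M hM

end NBPPaper
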